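/- arXiv:1811.03986 — 10 statements merged into one kernel-verified Lean document; each statement's English description precedes it below -/
import Mathlib

section
/- Let A₁ ∈ ℝ^{n₁×n₁}, b₁ ∈ ℝ^{n₁}, c₁ ∈ ℝ^{1×n₁} and A₂ ∈ ℝ^{n₂×n₂}, b₂ ∈ ℝ^{n₂}, c₂ ∈ ℝ^{1×n₂}. Then for every t ∈ ℝ, (c₁ e^{A₁t} b₁) · (c₂ e^{A₂t} b₂) = (c₁ ⊗ c₂) e^{(A₁ ⊕ A₂)t} (b₁ ⊗ b₂). -/
open Matrix Kronecker

/-- Kronecker sum of two square matrices: `X ⊕ Y = X ⊗ I + I ⊗ Y`. -/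
noncomputable def kroneckerSum {n m : ℕ} (X : Matrix (Fin n) (Fin n) ℝ)
    (Y : Matrix (Fin m) (Fin m) ℝ) : Matrix (Fin n × Fin m) (Fin n × Fin m) ℝ :=
  X ⊗ₖ (1 : Matrix (Fin m) (Fin m) ℝ) + (1 : Matrix (Fin n) (Fin n) ℝ) ⊗ₖ Y

open NormedSpace in
/-- `X ↦ X ⊗ₖ 1` as a ring hom. -/
noncomputable def kroneckerOneRight (n m : ℕ) :
    Matrix (Fin n) (Fin n) ℝ →+* Matrix (Fin n × Fin m) (Fin n × Fin m) ℝ where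
  toFun X := X ⊗ₖ (1 : Matrix (Fin m) (Fin m) ℝ)
  map_one' := Matrix.one_kronecker_one
  map_mul' X Y := by rw [← Matrix.mul_kronecker_mul, Matrix.one_mul]
  map_zero' := Matrix.zero_kronecker _
  map_add' X Y := Matrix.add_kronecker _ _ _

/-- `Y ↦ 1 ⊗ₖ Y` as a ring hom. -/
noncomputable def kroneckerOneLeft (n m : ℕ) :
    Matrix (Fin m) (Fin m) ℝ →+* Matrix (Fin n × Fin m) (Fin n × Fin m) ℝ where
  toFun Y := (1 : Matrix (Fin n) (Fin n) ℝ) ⊗ₖ Y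
  map_one' := Matrix.one_kronecker_one
  map_mul' X Y := by rw [← Matrix.mul_kronecker_mul, Matrix.one_mul]
  map_zero' := Matrix.kronecker_zero _
  map_add' X Y := Matrix.kronecker_add _ _ _

lemma continuous_kroneckerOneRight (n m : ℕ) : Continuous (kroneckerOneRight n m) := by
  apply continuous_matrix
  rintro ⟨i₁, i₂⟩ ⟨j₁, j₂⟩
  exact (continuous_apply_apply i₁ j₁).mul continuous_const

lemma continuous_kroneckerOneLeft (n m : ℕ) : Continuous (kroneckerOneLeft n m) := by
  apply continuous_matrix
  rintro ⟨i₁, i₂⟩ ⟨j₁, j₂⟩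
  exact continuous_const.mul (continuous_apply_apply i₂ j₂)

open NormedSpace in
lemma exp_kronecker_one {n m : ℕ} (X : Matrix (Fin n) (Fin n) ℝ) :
    exp (X ⊗ₖ (1 : Matrix (Fin m) (Fin m) ℝ)) = exp X ⊗ₖ (1 : Matrix (Fin m) (Fin m) ℝ) := by
  letI : SeminormedRing (Matrix (Fin n) (Fin n) ℝ) := Matrix.linftyOpSemiNormedRing
  letI : NormedRing (Matrix (Fin n) (Fin n) ℝ) := Matrix.linftyOpNormedRing
  letI : NormedAlgebra ℝ (Matrix (Fin n) (Fin n) ℝ) := Matrix.linftyOpNormedAlgebra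
  letI : NormedAlgebra ℚ (Matrix (Fin n) (Fin n) ℝ) := Matrix.linftyOpNormedAlgebra
  letI : SeminormedRing (Matrix (Fin n × Fin m) (Fin n × Fin m) ℝ) :=
    Matrix.linftyOpSemiNormedRing
  letI : NormedRing (Matrix (Fin n × Fin m) (Fin n × Fin m) ℝ) := Matrix.linftyOpNormedRing
  letI : NormedAlgebra ℝ (Matrix (Fin n × Fin m) (Fin n × Fin m) ℝ) :=
    Matrix.linftyOpNormedAlgebra
  exact (map_exp (kroneckerOneRight n m) (continuous_kroneckerOneRight n m) X).symm

open NormedSpace in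
lemma exp_one_kronecker {n m : ℕ} (Y : Matrix (Fin m) (Fin m) ℝ) :
    exp ((1 : Matrix (Fin n) (Fin n) ℝ) ⊗ₖ Y) = (1 : Matrix (Fin n) (Fin n) ℝ) ⊗ₖ exp Y := by
  letI : SeminormedRing (Matrix (Fin m) (Fin m) ℝ) := Matrix.linftyOpSemiNormedRing
  letI : NormedRing (Matrix (Fin m) (Fin m) ℝ) := Matrix.linftyOpNormedRing
  letI : NormedAlgebra ℝ (Matrix (Fin m) (Fin m) ℝ) := Matrix.linftyOpNormedAlgebra
  letI : NormedAlgebra ℚ (Matrix (Fin m) (Fin m) ℝ) := Matrix.linftyOpNormedAlgebra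
  letI : SeminormedRing (Matrix (Fin n × Fin m) (Fin n × Fin m) ℝ) :=
    Matrix.linftyOpSemiNormedRing
  letI : NormedRing (Matrix (Fin n × Fin m) (Fin n × Fin m) ℝ) := Matrix.linftyOpNormedRing
  letI : NormedAlgebra ℝ (Matrix (Fin n × Fin m) (Fin n × Fin m) ℝ) :=
    Matrix.linftyOpNormedAlgebra
  exact (map_exp (kroneckerOneLeft n m) (continuous_kroneckerOneLeft n m) Y).symm

open NormedSpace in
lemma exp_kroneckerSum {n m : ℕ} (X : Matrix (Fin n) (Fin n) ℝ)
    (Y : Matrix (Fin m) (Fin m) ℝ) :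
    exp (kroneckerSum X Y) = exp X ⊗ₖ exp Y := by
  have hcomm : Commute (X ⊗ₖ (1 : Matrix (Fin m) (Fin m) ℝ))
      ((1 : Matrix (Fin n) (Fin n) ℝ) ⊗ₖ Y) := by
    unfold Commute SemiconjBy
    rw [← Matrix.mul_kronecker_mul, ← Matrix.mul_kronecker_mul, Matrix.one_mul, Matrix.mul_one,
      Matrix.one_mul, Matrix.mul_one]
  rw [kroneckerSum, Matrix.exp_add_of_commute _ _ hcomm, exp_kronecker_one, exp_one_kronecker,
    ← Matrix.mul_kronecker_mul, Matrix.one_mul, Matrix.mul_one]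

/-- Impulse response product: the product of two impulse responses
`(c₁ e^{A₁ t} b₁) (c₂ e^{A₂ t} b₂)` equals the impulse response of the Kronecker
compound system `(A₁ ⊕ A₂, b₁ ⊗ b₂, c₁ ⊗ c₂)`. -/
theorem impulse_response_product {n₁ n₂ : ℕ}
    (A₁ : Matrix (Fin n₁) (Fin n₁) ℝ) (b₁ : Matrix (Fin n₁) (Fin 1) ℝ)
    (c₁ : Matrix (Fin 1) (Fin n₁) ℝ)
    (A₂ : Matrix (Fin n₂) (Fin n₂) ℝ) (b₂ : Matrix (Fin n₂) (Fin 1) ℝ)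
    (c₂ : Matrix (Fin 1) (Fin n₂) ℝ) (t : ℝ) :
    (c₁ * NormedSpace.exp (t • A₁) * b₁) 0 0 *
      (c₂ * NormedSpace.exp (t • A₂) * b₂) 0 0 =
    ((c₁ ⊗ₖ c₂) * NormedSpace.exp (t • kroneckerSum A₁ A₂) * (b₁ ⊗ₖ b₂)) (0, 0) (0, 0) := by
  have hsmul : t • kroneckerSum A₁ A₂ = kroneckerSum (t • A₁) (t • A₂) := by
    simp [kroneckerSum, smul_add, Matrix.smul_kronecker, Matrix.kronecker_smul]
  rw [hsmul, exp_kroneckerSum, ← Matrix.mul_kronecker_mul, ← Matrix.mul_kronecker_mul]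
  rfl
end

section
/- Let g : ℝ → ℝ be continuous on [0,∞) and satisfy g(t) = 0 for all t < 0. Then g(t) ≥ 0 for all t ≥ 0 if and only if for every bounded measurable nondecreasing function u : ℝ → ℝ with u(t) ≥ 0 for all t and u(t) = 0 for all t ≤ 0, the output y = g ∗ u is nonnegative and nondecreasing on ℝ. -/
open MeasureTheory

/-- The convolution `(g ∗ u)(t) = ∫ g(t − τ) u(τ) dτ`. -/
noncomputable def conv (g u : ℝ → ℝ) (t : ℝ) : ℝ :=
  ∫ τ : ℝ, g (t - τ) * u τ

/-- Rewrite the convolution by the change of variables `σ = t − τ`. -/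
lemma conv_eq_comm (g u : ℝ → ℝ) (t : ℝ) :
    conv g u t = ∫ σ : ℝ, g σ * u (t - σ) := by
  rw [conv, ← integral_sub_left_eq_self (fun σ => g σ * u (t - σ)) volume t]
  congr 1
  funext τ
  simp

lemma causal_aestronglyMeasurable (g : ℝ → ℝ) (hg_cont : ContinuousOn g (Set.Ici 0))
    (hg_causal : ∀ t < (0 : ℝ), g t = 0) :
    AEStronglyMeasurable g (volume : Measure ℝ) := by
  have h1 : g = (Set.Ici (0:ℝ)).indicator g := by
    funext x
    by_cases hx : (0:ℝ) ≤ x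
    · simp [Set.indicator, hx]
    · simp [Set.indicator, hx, hg_causal x (lt_of_not_ge hx)]
  rw [h1]
  exact (aestronglyMeasurable_indicator_iff measurableSet_Ici).mpr
    (hg_cont.aestronglyMeasurable measurableSet_Ici)

lemma integrable_shift (g u : ℝ → ℝ) (hg_cont : ContinuousOn g (Set.Ici 0))
    (hg_causal : ∀ t < (0 : ℝ), g t = 0) (hu_meas : Measurable u)
    (C : ℝ) (hC : ∀ t, |u t| ≤ C) (hu_zero : ∀ t ≤ (0 : ℝ), u t = 0) (t : ℝ) :
    Integrable (fun σ => g σ * u (t - σ)) (volume : Measure ℝ) := by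
  set T : ℝ := max t 0 with hT
  obtain ⟨M, hM⟩ := (isCompact_Icc (a := (0:ℝ)) (b := T)).exists_bound_of_continuousOn
    (hg_cont.mono (Set.Icc_subset_Ici_self))
  have hC0 : 0 ≤ C := le_trans (abs_nonneg _) (hC 0)
  have hM0 : 0 ≤ M := by
    have := hM 0 ⟨le_refl _, le_max_right t 0⟩
    exact le_trans (norm_nonneg _) this
  have hmeas : AEStronglyMeasurable (fun σ => g σ * u (t - σ)) (volume : Measure ℝ) := by
    exact (causal_aestronglyMeasurable g hg_cont hg_causal).mul
      ((hu_meas.comp (measurable_const.sub measurable_id)).aestronglyMeasurable)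
  have hbound_int : Integrable ((Set.Icc (0:ℝ) T).indicator (fun _ => M * C)) volume := by
    rw [integrable_indicator_iff measurableSet_Icc]
    exact integrableOn_const measure_Icc_lt_top.ne
  refine hbound_int.mono' hmeas (Filter.Eventually.of_forall fun σ => ?_)
  by_cases hσ : σ ∈ Set.Icc (0:ℝ) T
  · rw [Set.indicator_of_mem hσ]
    have h1 : ‖g σ‖ ≤ M := hM σ hσ
    have h2 : ‖u (t - σ)‖ ≤ C := by simpa [Real.norm_eq_abs] using hC (t - σ)
    calc ‖g σ * u (t - σ)‖ = ‖g σ‖ * ‖u (t - σ)‖ := norm_mul _ _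
      _ ≤ M * C := mul_le_mul h1 h2 (norm_nonneg _) hM0
  · rw [Set.indicator_of_notMem hσ]
    have : g σ * u (t - σ) = 0 := by
      rcases not_and_or.mp hσ with h | h
      · rw [hg_causal σ (lt_of_not_ge h), zero_mul]
      · have hσT : T < σ := lt_of_not_ge h
        have : t - σ ≤ 0 := by
          have : t ≤ T := le_max_left t 0
          linarith
        rw [hu_zero _ this, mul_zero]
    simp [this]

/-- A causal impulse response (continuous on `[0,∞)`, vanishing on `(−∞,0)`) is
nonnegative on `[0,∞)` if and only if the system maps every nonnegative bounded
measurable nondecreasing input vanishing on `(−∞,0]` to a nonnegative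
nondecreasing output. -/
theorem external_positivity_iff_monotone_to_monotone
    (g : ℝ → ℝ) (hg_cont : ContinuousOn g (Set.Ici 0))
    (hg_causal : ∀ t < (0 : ℝ), g t = 0) :
    (∀ t ≥ (0 : ℝ), 0 ≤ g t) ↔
      (∀ u : ℝ → ℝ, Measurable u → (∃ C : ℝ, ∀ t, |u t| ≤ C) → Monotone u →
        (∀ t, 0 ≤ u t) → (∀ t ≤ (0 : ℝ), u t = 0) →
        (∀ t : ℝ, 0 ≤ conv g u t) ∧ Monotone (conv g u)) := by
  constructor
  · -- forward direction
    intro hg_pos u hu_meas ⟨C, hC⟩ hu_mono hu_nonneg hu_zero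
    have hg_nonneg : ∀ s : ℝ, 0 ≤ g s := by
      intro s
      by_cases hs : 0 ≤ s
      · exact hg_pos s hs
      · rw [hg_causal s (lt_of_not_ge hs)]
    constructor
    · intro t
      exact integral_nonneg fun τ => mul_nonneg (hg_nonneg _) (hu_nonneg _)
    · intro s t hst
      rw [conv_eq_comm, conv_eq_comm]
      refine integral_mono
        (integrable_shift g u hg_cont hg_causal hu_meas C hC hu_zero s)
        (integrable_shift g u hg_cont hg_causal hu_meas C hC hu_zero t)
        fun σ => ?_
      exact mul_le_mul_of_nonneg_left (hu_mono (by linarith : s - σ ≤ t - σ)) (hg_nonneg σ)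
  · -- backward direction
    intro H t₀ ht₀
    by_contra hneg
    push_neg at hneg
    set u : ℝ → ℝ := (Set.Ioi (0:ℝ)).indicator (fun _ => (1:ℝ)) with hu_def
    have hu_meas : Measurable u := measurable_const.indicator measurableSet_Ioi
    have hu_bdd : ∃ C : ℝ, ∀ t, |u t| ≤ C := by
      refine ⟨1, fun t => ?_⟩
      by_cases h : t ∈ Set.Ioi (0:ℝ) <;> simp [hu_def, Set.indicator, h]
    have hu_mono : Monotone u := by
      intro a b hab
      by_cases ha : (0:ℝ) < a
      · have hb : (0:ℝ) < b := lt_of_lt_of_le ha hab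
        simp [hu_def, Set.indicator, ha, hb]
      · by_cases hb : (0:ℝ) < b <;> simp [hu_def, Set.indicator, ha, hb]
    have hu_nonneg : ∀ t, 0 ≤ u t := by
      intro t
      by_cases h : t ∈ Set.Ioi (0:ℝ) <;> simp [hu_def, Set.indicator, h]
    have hu_zero : ∀ t ≤ (0:ℝ), u t = 0 := by
      intro t ht
      simp [hu_def, Set.indicator, not_lt.mpr ht]
    obtain ⟨hy_nonneg, hy_mono⟩ := H u hu_meas hu_bdd hu_mono hu_nonneg hu_zero
    -- the output is the running integral of g
    have hy_eq : ∀ t : ℝ, conv g u t = ∫ σ in Set.Iio t, g σ := by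
      intro t
      rw [conv_eq_comm, ← integral_indicator measurableSet_Iio]
      congr 1
      funext σ
      by_cases hσ : σ < t
      · have : t - σ ∈ Set.Ioi (0:ℝ) := by simp; linarith
        simp [hu_def, Set.indicator, hσ, this, sub_pos.mpr hσ]
      · have : ¬ (0 < t - σ) := by push_neg; linarith
        simp [hu_def, Set.indicator, hσ, this]
    -- g is negative on a right neighborhood [t₀, b]
    have hcw : ContinuousWithinAt g (Set.Ici 0) t₀ := hg_cont t₀ ht₀
    have hmem : g ⁻¹' (Set.Iio (g t₀ / 2)) ∈ nhdsWithin t₀ (Set.Ici 0) :=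
      hcw (Iio_mem_nhds (by linarith))
    have hmem' : g ⁻¹' (Set.Iio (g t₀ / 2)) ∈ nhdsWithin t₀ (Set.Ici t₀) :=
      nhdsWithin_mono t₀ (Set.Ici_subset_Ici.mpr ht₀) hmem
    obtain ⟨b, hb, hIcc⟩ := mem_nhdsGE_iff_exists_Icc_subset.mp hmem'
    -- integrability of g on lower rays
    have hIntIio : ∀ t : ℝ, IntegrableOn g (Set.Iio t) volume := by
      intro t
      have h1 : IntegrableOn g (Set.Iio (0:ℝ)) volume := by
        exact (integrableOn_congr_fun (g := fun _ => (0:ℝ))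
          (fun x hx => hg_causal x hx) measurableSet_Iio).mpr integrableOn_zero
      have h2 : IntegrableOn g (Set.Icc (0:ℝ) (max t 0)) volume :=
        (hg_cont.mono Set.Icc_subset_Ici_self).integrableOn_Icc
      refine ((h1.union h2).mono_set fun x hx => ?_)
      by_cases hx0 : x < 0
      · exact Or.inl hx0
      · exact Or.inr ⟨not_lt.mp hx0, le_trans (le_of_lt hx) (le_max_left t 0)⟩
    -- split the integral
    have hsplit : (∫ σ in Set.Iio b, g σ)
        = (∫ σ in Set.Iio t₀, g σ) + ∫ σ in Set.Ico t₀ b, g σ := by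
      rw [show Set.Iio b = Set.Iio t₀ ∪ Set.Ico t₀ b from
          (Set.Iio_union_Ico_eq_Iio (le_of_lt hb)).symm,
        setIntegral_union ((Set.Iio_disjoint_Ici le_rfl).mono_right Set.Ico_subset_Ici_self)
          measurableSet_Ico
          ((hIntIio b).mono_set fun x hx => lt_of_lt_of_le hx (le_of_lt hb))
          ((hIntIio b).mono_set fun x hx => hx.2)]
    have hmono' : (0:ℝ) ≤ ∫ σ in Set.Ico t₀ b, g σ := by
      have := hy_mono (le_of_lt hb)
      rw [hy_eq t₀, hy_eq b, hsplit] at this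
      linarith
    have hlt : (∫ σ in Set.Ico t₀ b, g σ) ≤ (b - t₀) * (g t₀ / 2) := by
      have h1 : (∫ σ in Set.Ico t₀ b, g σ) ≤ ∫ _ in Set.Ico t₀ b, (g t₀ / 2) :=
        setIntegral_mono_on ((hIntIio b).mono_set fun x hx => hx.2)
          (integrableOn_const measure_Ico_lt_top.ne) measurableSet_Ico
          (fun x hx => le_of_lt (hIcc ⟨hx.1, le_of_lt hx.2⟩))
      rw [setIntegral_const, Real.volume_real_Ico_of_le (by linarith)] at h1
      simpa [smul_eq_mul] using h1
    have : (b - t₀) * (g t₀ / 2) < 0 :=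
      mul_neg_of_pos_of_neg (by linarith) (by linarith)
    linarith
end

section
/- Let λ₁, …, λ_n ∈ ℂ be distinct and β₁, …, β_n ∈ ℂ be nonzero, such that the family of pairs (λ_i, β_i) is closed under complex conjugation, so that g(t) = Σ_{i=1}^n β_i e^{λ_i t} is real-valued for all t ∈ ℝ. If g(t) ≥ 0 for all t ≥ 0, then there exists an index i such that λ_i is real and Re λ_j ≤ λ_i for all j = 1, …, n. -/
open Complex Filter intervalIntegral

/-- Finite Laplace integral of an exponential sum. -/
lemma drp_integral_formula {n : ℕ} (lam β : Fin n → ℂ) (z : ℂ)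
    (hz : ∀ i, lam i ≠ z) (T : ℝ) :
    (∫ t in (0:ℝ)..T, (∑ i, β i * Complex.exp (lam i * t)) * Complex.exp (-(z * t)))
      = ∑ i, β i * ((Complex.exp ((lam i - z) * T) - 1) / (lam i - z)) := by
  have h1 : ∀ t : ℝ, (∑ i, β i * Complex.exp (lam i * t)) * Complex.exp (-(z * t))
      = ∑ i, β i * Complex.exp ((lam i - z) * t) := by
    intro t
    rw [Finset.sum_mul]
    refine Finset.sum_congr rfl fun i _ => ?_
    rw [mul_assoc, ← Complex.exp_add]
    ring_nf
  simp only [h1]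
  rw [intervalIntegral.integral_finset_sum]
  · refine Finset.sum_congr rfl fun i _ => ?_
    rw [intervalIntegral.integral_const_mul, integral_exp_mul_complex (sub_ne_zero.mpr (hz i))]
    simp
  · intro i _
    exact Continuous.intervalIntegrable (by continuity) _ _


lemma drp_exp_tendsto_zero {w : ℂ} (hw : w.re < 0) :
    Tendsto (fun T : ℝ => Complex.exp (w * T)) atTop (nhds 0) := by
  rw [tendsto_zero_iff_norm_tendsto_zero]
  have h1 : ∀ T : ℝ, ‖Complex.exp (w * T)‖ = Real.exp (w.re * T) := by
    intro T
    rw [Complex.norm_exp]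
    congr 1
    simp [Complex.mul_re]
  simp only [h1]
  exact Real.tendsto_exp_atBot.comp (Filter.Tendsto.const_mul_atTop_of_neg hw tendsto_id)

lemma drp_tendsto {n : ℕ} (lam β : Fin n → ℂ) (z : ℂ)
    (hz : ∀ i, (lam i).re < z.re) :
    Tendsto (fun T : ℝ => ∑ i, β i * ((Complex.exp ((lam i - z) * T) - 1) / (lam i - z)))
      atTop (nhds (∑ i, β i / (z - lam i))) := by
  refine tendsto_finset_sum _ fun i _ => ?_
  have hne : lam i - z ≠ 0 := by
    intro h
    have := hz i
    rw [sub_eq_zero] at h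
    rw [h] at this
    exact lt_irrefl _ this
  have h0 : Tendsto (fun T : ℝ => Complex.exp ((lam i - z) * T)) atTop (nhds 0) :=
    drp_exp_tendsto_zero (by simpa [sub_re] using sub_neg.mpr (hz i))
  have : Tendsto (fun T : ℝ => β i * ((Complex.exp ((lam i - z) * T) - 1) / (lam i - z)))
      atTop (nhds (β i * ((0 - 1) / (lam i - z)))) :=
    (((h0.sub tendsto_const_nhds).div_const _).const_mul _)
  have heq : β i * ((0 - 1) / (lam i - z)) = β i / (z - lam i) := by
    rw [zero_sub, ← neg_sub z (lam i), div_neg, neg_div, neg_neg, one_div, div_eq_mul_inv]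
  rwa [heq] at this


lemma drp_norm_le {n : ℕ} (lam β : Fin n → ℂ)
    (h_real : ∀ t : ℝ, (∑ i, β i * Complex.exp (lam i * t)).im = 0)
    (h_pos : ∀ t : ℝ, 0 ≤ t → 0 ≤ (∑ i, β i * Complex.exp (lam i * t)).re)
    (z : ℂ) (T : ℝ) (hT : 0 ≤ T) :
    ‖∫ t in (0:ℝ)..T, (∑ i, β i * Complex.exp (lam i * t)) * Complex.exp (-(z * t))‖
    ≤ ‖∫ t in (0:ℝ)..T, (∑ i, β i * Complex.exp (lam i * t)) * Complex.exp (-(((z.re : ℝ) : ℂ) * t))‖ := by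
  set G : ℝ → ℂ := fun t => ∑ i, β i * Complex.exp (lam i * t) with hG
  set g : ℝ → ℝ := fun t => (G t).re with hg
  have fact1 : ∀ t : ℝ, G t = ((g t : ℝ) : ℂ) := by
    intro t
    apply Complex.ext
    · simp [hg]
    · exact h_real t
  have fact2 : ∀ t : ℝ, G t * Complex.exp (-(((z.re : ℝ) : ℂ) * t))
      = (((g t * Real.exp (-(z.re * t)) : ℝ)) : ℂ) := by
    intro t
    rw [fact1 t, show (-(((z.re : ℝ) : ℂ) * (t:ℂ))) = (((-(z.re * t) : ℝ)) : ℂ) by push_cast; ring,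
      ← Complex.ofReal_exp, ← Complex.ofReal_mul]
  have hRHS : (∫ t in (0:ℝ)..T, G t * Complex.exp (-(((z.re : ℝ) : ℂ) * t)))
      = (((∫ t in (0:ℝ)..T, g t * Real.exp (-(z.re * t))) : ℝ) : ℂ) := by
    simp only [fact2]
    exact intervalIntegral.integral_ofReal
  have hI : 0 ≤ ∫ t in (0:ℝ)..T, g t * Real.exp (-(z.re * t)) := by
    apply intervalIntegral.integral_nonneg hT
    intro t ht
    exact mul_nonneg (h_pos t ht.1) (Real.exp_nonneg _)
  calc ‖∫ t in (0:ℝ)..T, G t * Complex.exp (-(z * t))‖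
      ≤ ∫ t in (0:ℝ)..T, ‖G t * Complex.exp (-(z * t))‖ :=
        intervalIntegral.norm_integral_le_integral_norm hT
    _ = ∫ t in (0:ℝ)..T, g t * Real.exp (-(z.re * t)) := by
        apply intervalIntegral.integral_congr
        intro t ht
        rw [Set.uIcc_of_le hT] at ht
        simp only []
        rw [norm_mul, fact1 t]
        rw [Complex.norm_real, Complex.norm_exp]
        rw [Real.norm_eq_abs, _root_.abs_of_nonneg (h_pos t ht.1)]
        congr 1
        simp [Complex.mul_re]
    _ = ‖∫ t in (0:ℝ)..T, G t * Complex.exp (-(((z.re : ℝ) : ℂ) * t))‖ := by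
        rw [hRHS, Complex.norm_real, Real.norm_eq_abs, _root_.abs_of_nonneg hI]

lemma drp_abs_le_abs_add {v : ℂ} {e : ℝ} (hv : 0 ≤ v.re) (he : 0 ≤ e) :
    ‖v‖ ≤ ‖v + (e : ℂ)‖ := by
  rw [Complex.norm_def, Complex.norm_def]
  apply Real.sqrt_le_sqrt
  simp only [Complex.normSq_apply, Complex.add_re, Complex.add_im, Complex.ofReal_re,
    Complex.ofReal_im, add_zero]
  nlinarith


/-- Dominant real pole of externally positive systems: if a real-valued
exponential sum `g(t) = Σ βᵢ e^{λᵢ t}` (with distinct exponents, nonzero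
coefficients, and the family of pairs `(λᵢ, βᵢ)` closed under conjugation) is
nonnegative on `[0,∞)`, then the pole of maximal real part is real. -/
theorem dominant_real_pole {n : ℕ} (hn : 0 < n) (lam β : Fin n → ℂ)
    (h_distinct : Function.Injective lam)
    (h_nonzero : ∀ i, β i ≠ 0)
    (h_conj : ∀ i, ∃ j, lam j = starRingEnd ℂ (lam i) ∧ β j = starRingEnd ℂ (β i))
    (h_real : ∀ t : ℝ, (∑ i, β i * Complex.exp (lam i * t)).im = 0)
    (h_pos : ∀ t : ℝ, 0 ≤ t → 0 ≤ (∑ i, β i * Complex.exp (lam i * t)).re) :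
    ∃ i, (lam i).im = 0 ∧ ∀ j, (lam j).re ≤ (lam i).re := by
  by_contra hcon
  push_neg at hcon
  -- maximal real part
  have hne : Nonempty (Fin n) := Fin.pos_iff_nonempty.mp hn
  obtain ⟨j₀, -, hmax'⟩ := Finset.exists_max_image Finset.univ (fun i => (lam i).re)
    Finset.univ_nonempty
  set α : ℝ := (lam j₀).re with hα
  have hmax : ∀ j, (lam j).re ≤ α := fun j => hmax' j (Finset.mem_univ j)
  have hlt : ∀ i, (lam i).im = 0 → (lam i).re < α := by
    intro i hi
    obtain ⟨j, hj⟩ := hcon i hi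
    exact lt_of_lt_of_le hj (hmax j)
  -- constants
  set c : Fin n → ℝ := fun i => if (lam i).im = 0 then α - (lam i).re else |(lam i).im| with hc
  have hcpos : ∀ i, 0 < c i := by
    intro i
    by_cases hi : (lam i).im = 0
    · simp only [hc, if_pos hi]
      linarith [hlt i hi]
    · simp only [hc, if_neg hi]
      exact abs_pos.mpr hi
  set C : ℝ := ∑ i, ‖β i‖ / c i with hC
  have hCnn : 0 ≤ C :=
    Finset.sum_nonneg fun i _ => div_nonneg (norm_nonneg _) (hcpos i).le
  set D : ℝ := ∑ i ∈ Finset.univ.erase j₀, ‖β i‖ / ‖lam j₀ - lam i‖ with hD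
  have hDnn : 0 ≤ D :=
    Finset.sum_nonneg fun i _ => div_nonneg (norm_nonneg _) (norm_nonneg _)
  have hb : (0:ℝ) < ‖β j₀‖ := norm_pos_iff.mpr (h_nonzero j₀)
  set ε : ℝ := ‖β j₀‖ / (C + D + 1) with hε
  have hεpos : 0 < ε := div_pos hb (by linarith)
  set z : ℂ := lam j₀ + (ε : ℂ) with hz
  have hzre : z.re = α + ε := by simp [hz, hα]
  have hzgt : ∀ i, (lam i).re < z.re := by
    intro i
    rw [hzre]
    linarith [hmax i]
  set w : ℂ := ((z.re : ℝ) : ℂ) with hw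
  have hwre : w.re = z.re := by simp [hw]
  have hwgt : ∀ i, (lam i).re < w.re := by
    intro i; rw [hwre]; exact hzgt i
  -- the limit Laplace transforms
  have key : ∀ u : ℂ, (∀ i, (lam i).re < u.re) →
      Tendsto (fun T : ℝ => ∫ t in (0:ℝ)..T,
          (∑ i, β i * Complex.exp (lam i * t)) * Complex.exp (-(u * t)))
        atTop (nhds (∑ i, β i / (u - lam i))) := by
    intro u hu
    have hneq : ∀ i, lam i ≠ u := by
      intro i h
      have := hu i
      rw [h] at this
      exact lt_irrefl _ this
    have := drp_tendsto lam β u hu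
    refine this.congr fun T => ?_
    exact (drp_integral_formula lam β u hneq T).symm
  -- the norm inequality in the limit
  have hle : ‖∑ i, β i / (z - lam i)‖ ≤ ‖∑ i, β i / (w - lam i)‖ := by
    refine le_of_tendsto_of_tendsto ((key z hzgt).norm) ((key w hwgt).norm) ?_
    filter_upwards [eventually_ge_atTop (0:ℝ)] with T hT
    exact drp_norm_le lam β h_real h_pos z T hT
  -- upper bound
  have hub : ‖∑ i, β i / (w - lam i)‖ ≤ C := by
    refine le_trans (norm_sum_le _ _) ?_
    rw [hC]
    refine Finset.sum_le_sum fun i _ => ?_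
    rw [norm_div]
    refine div_le_div_of_nonneg_left (norm_nonneg _) (hcpos i) ?_
    by_cases hi : (lam i).im = 0
    · have h1 : c i = α - (lam i).re := by simp [hc, hi]
      have h2 : (w - lam i).re ≤ ‖w - lam i‖ := by
        exact Complex.re_le_norm _
      have h3 : (w - lam i).re = α + ε - (lam i).re := by
        simp [Complex.sub_re, hwre, hzre]
      rw [h1]
      rw [h3] at h2
      linarith
    · have h1 : c i = |(lam i).im| := by simp [hc, hi]
      have h2 : |(w - lam i).im| ≤ ‖w - lam i‖ := by
        exact Complex.abs_im_le_norm _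
      have h3 : (w - lam i).im = -(lam i).im := by simp [hw]
      rw [h1]
      rw [h3, abs_neg] at h2
      linarith
  -- lower bound
  have hsplit : (∑ i, β i / (z - lam i))
      = β j₀ / (z - lam j₀) + ∑ i ∈ Finset.univ.erase j₀, β i / (z - lam i) :=
    (Finset.add_sum_erase _ _ (Finset.mem_univ j₀)).symm
  have hfirst : ‖β j₀ / (z - lam j₀)‖ = C + D + 1 := by
    have h1 : z - lam j₀ = (ε : ℂ) := by rw [hz]; ring
    rw [h1, norm_div, Complex.norm_real, Real.norm_eq_abs, _root_.abs_of_pos hεpos, hε]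
    field_simp
  have hrest : ‖∑ i ∈ Finset.univ.erase j₀, β i / (z - lam i)‖ ≤ D := by
    refine le_trans (norm_sum_le _ _) ?_
    rw [hD]
    refine Finset.sum_le_sum fun i hi => ?_
    have hij : i ≠ j₀ := Finset.ne_of_mem_erase hi
    have hvne : lam j₀ - lam i ≠ 0 := sub_ne_zero.mpr fun h => hij (h_distinct h).symm
    rw [norm_div]
    refine div_le_div_of_nonneg_left (norm_nonneg _) (norm_pos_iff.mpr hvne) ?_
    have h1 : z - lam i = (lam j₀ - lam i) + (ε : ℂ) := by rw [hz]; ring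
    rw [h1]
    refine drp_abs_le_abs_add ?_ hεpos.le
    simp only [Complex.sub_re]
    linarith [hmax i]
  have hlower : C + 1 ≤ ‖∑ i, β i / (z - lam i)‖ := by
    rw [hsplit]
    have h4 : ‖β j₀ / (z - lam j₀)‖ ≤
        ‖β j₀ / (z - lam j₀) + ∑ i ∈ Finset.univ.erase j₀, β i / (z - lam i)‖
        + ‖∑ i ∈ Finset.univ.erase j₀, β i / (z - lam i)‖ :=
      norm_le_add_norm_add _ _
    rw [hfirst] at h4
    linarith
  linarith
end

section
/- Let A ∈ ℝ^{n×n}, b ∈ ℝ^n, c ∈ ℝ^{1×n}. Suppose there exist a symmetric matrix Q ∈ ℝ^{n×n} and γ ∈ ℝ such that: (i) AᵀQ + QA + 2γQ is negative semidefinite; (ii) bᵀQb ≤ 0; (iii) Q + cᵀc is positive definite; (iv) c·b ≥ 0; and (v) Q has exactly n−1 positive eigenvalues and exactly one negative eigenvalue (counted with multiplicity). Then c e^{At} b ≥ 0 for all t ≥ 0. -/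
open Matrix

/-- Each entry of `exp(tA) b` is differentiable in `t`, with derivative the
corresponding entry of `A exp(tA) b`. -/
private lemma entry_hasDerivAt {n : ℕ} (A : Matrix (Fin n) (Fin n) ℝ)
    (b : Matrix (Fin n) (Fin 1) ℝ) (i : Fin n) (t : ℝ) :
    HasDerivAt (fun s : ℝ => (NormedSpace.exp (s • A) * b) i 0)
      ((A * NormedSpace.exp (t • A) * b) i 0) t := by
  letI : SeminormedRing (Matrix (Fin n) (Fin n) ℝ) := Matrix.linftyOpSemiNormedRing
  letI : NormedRing (Matrix (Fin n) (Fin n) ℝ) := Matrix.linftyOpNormedRing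
  letI : NormedAlgebra ℝ (Matrix (Fin n) (Fin n) ℝ) := Matrix.linftyOpNormedAlgebra
  have h := hasDerivAt_exp_smul_const' (𝕂 := ℝ) A t
  let L : Matrix (Fin n) (Fin n) ℝ →ₗ[ℝ] ℝ :=
    { toFun := fun M => (M * b) i 0
      map_add' := fun M N => by simp [Matrix.add_mul]
      map_smul' := fun r M => by simp [Matrix.smul_mul] }
  have hh := ((LinearMap.toContinuousLinearMap L).hasFDerivAt
    (x := NormedSpace.exp (t • A))).comp_hasDerivAt t h
  exact hh

private lemma col_quad {n : ℕ} (Q : Matrix (Fin n) (Fin n) ℝ) (u : Matrix (Fin n) (Fin 1) ℝ) :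
    (uᵀ * Q * u) 0 0 = (fun i => u i 0) ⬝ᵥ (Q *ᵥ fun i => u i 0) := by
  simp only [Matrix.mul_apply, dotProduct, mulVec, transpose_apply, Finset.sum_mul,
    Finset.mul_sum]
  rw [Finset.sum_comm]
  refine Finset.sum_congr rfl fun i _ => Finset.sum_congr rfl fun j _ => by ring

/-- Sufficient LMI-type test for external positivity: under conditions (i)–(v)
on a symmetric matrix `Q` with exactly `n−1` positive and one negative
eigenvalue, the impulse response `c e^{At} b` is nonnegative on `[0,∞)`. -/
theorem sufficient_test_external_positivity {n : ℕ}
    (A : Matrix (Fin n) (Fin n) ℝ) (b : Matrix (Fin n) (Fin 1) ℝ)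
    (c : Matrix (Fin 1) (Fin n) ℝ)
    (Q : Matrix (Fin n) (Fin n) ℝ) (γ : ℝ)
    (hQ : Q.IsHermitian)
    (h1 : (-(Aᵀ * Q + Q * A + (2 * γ) • Q)).PosSemidef)
    (h2 : (bᵀ * Q * b) 0 0 ≤ 0)
    (h3 : (Q + cᵀ * c).PosDef)
    (h4 : 0 ≤ (c * b) 0 0)
    (h5 : (Finset.univ.filter fun i => 0 < hQ.eigenvalues i).card = n - 1 ∧
          (Finset.univ.filter fun i => hQ.eigenvalues i < 0).card = 1) :
    ∀ t : ℝ, 0 ≤ t → 0 ≤ (c * NormedSpace.exp (t • A) * b) 0 0 := by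
  intro t ht
  rcases eq_or_ne b 0 with rfl | hb
  · simp
  set x : ℝ → Fin n → ℝ := fun s i => (NormedSpace.exp (s • A) * b) i 0 with hxdef
  set y : ℝ → Fin n → ℝ := fun s i => (A * NormedSpace.exp (s • A) * b) i 0 with hydef
  have hy : ∀ s, y s = A *ᵥ x s := by
    intro s
    funext i
    show (A * NormedSpace.exp (s • A) * b) i 0 = _
    rw [Matrix.mul_assoc, Matrix.mul_apply]
    rfl
  set f : ℝ → ℝ := fun s => ∑ i, c 0 i * x s i with hfdef
  set g : ℝ → ℝ := fun s => x s ⬝ᵥ (Q *ᵥ x s) with hgdef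
  set D : ℝ → ℝ := fun s => y s ⬝ᵥ (Q *ᵥ x s) + x s ⬝ᵥ (Q *ᵥ y s) with hDdef
  have hxd : ∀ (i : Fin n) (s : ℝ), HasDerivAt (fun u => x u i) (y s i) s :=
    fun i s => entry_hasDerivAt A b i s
  have hfd : ∀ s, HasDerivAt f (∑ i, c 0 i * y s i) s :=
    fun s => HasDerivAt.fun_sum fun i _ => (hxd i s).const_mul (c 0 i)
  have hgd : ∀ s, HasDerivAt g (D s) s := by
    intro s
    have h : HasDerivAt (fun u : ℝ => ∑ i, x u i * ∑ j, Q i j * x u j)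
        (∑ i, (y s i * ∑ j, Q i j * x s j + x s i * ∑ j, Q i j * y s j)) s :=
      HasDerivAt.fun_sum fun i _ =>
        ((hxd i s).mul (HasDerivAt.fun_sum fun j _ => (hxd j s).const_mul (Q i j)))
    have hD : D s = ∑ i, (y s i * ∑ j, Q i j * x s j + x s i * ∑ j, Q i j * y s j) := by
      simp [hDdef, dotProduct, mulVec, Finset.sum_add_distrib]
    rw [hD]
    exact h
  -- key differential inequality
  have key1 : ∀ s, D s + (2 * γ) * g s ≤ 0 := by
    intro s
    have h := h1.dotProduct_mulVec_nonneg (x s)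
    rw [star_trivial] at h
    have c1 : x s ⬝ᵥ ((Aᵀ * Q) *ᵥ x s) = y s ⬝ᵥ (Q *ᵥ x s) := by
      rw [← mulVec_mulVec, Matrix.dotProduct_mulVec, vecMul_transpose, hy s]
    have c2 : x s ⬝ᵥ ((Q * A) *ᵥ x s) = x s ⬝ᵥ (Q *ᵥ y s) := by
      rw [← mulVec_mulVec, hy s]
    have c3 : x s ⬝ᵥ (((2 * γ) • Q) *ᵥ x s) = (2 * γ) * g s := by
      rw [smul_mulVec, dotProduct_smul, smul_eq_mul, hgdef]
    have e1 : x s ⬝ᵥ ((-(Aᵀ * Q + Q * A + (2 * γ) • Q)) *ᵥ x s)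
        = -(D s + (2 * γ) * g s) := by
      rw [neg_mulVec, dotProduct_neg, add_mulVec, add_mulVec, dotProduct_add, dotProduct_add,
        c1, c2, c3, hDdef]
    rw [e1] at h
    linarith
  -- Gronwall: g s ≤ 0 for s ≥ 0
  have hg0 : g 0 ≤ 0 := by
    have hx0 : x 0 = fun i => b i 0 := by
      funext i
      simp [hxdef, NormedSpace.exp_zero]
    have hq : g 0 = (bᵀ * Q * b) 0 0 := by
      rw [col_quad]
      show x 0 ⬝ᵥ Q *ᵥ x 0 = _
      rw [hx0]
    rw [hq]
    exact h2
  have hgs : ∀ s, 0 ≤ s → g s ≤ 0 := by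
    intro s hs
    set F : ℝ → ℝ := fun u => Real.exp (2 * γ * u) * g u with hFdef
    have hFd : ∀ u, HasDerivAt F (Real.exp (2 * γ * u) * (2 * γ * g u + D u)) u := by
      intro u
      have hlin : HasDerivAt (fun v : ℝ => 2 * γ * v) (2 * γ) u := by
        simpa using (hasDerivAt_id u).const_mul (2 * γ)
      have hexp : HasDerivAt (fun v : ℝ => Real.exp (2 * γ * v))
          (Real.exp (2 * γ * u) * (2 * γ)) u := hlin.exp
      have := hexp.fun_mul (hgd u)
      refine this.congr_deriv ?_
      ring
    have hanti : AntitoneOn F (Set.Ici (0 : ℝ)) := by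
      apply antitoneOn_of_deriv_nonpos (convex_Ici 0)
      · exact fun u _ => (hFd u).continuousAt.continuousWithinAt
      · exact fun u _ => (hFd u).differentiableAt.differentiableWithinAt
      · intro u _
        rw [(hFd u).deriv]
        have h1' := key1 u
        have h2' := (Real.exp_pos (2 * γ * u)).le
        nlinarith
    have hF : F s ≤ F 0 := hanti Set.self_mem_Ici (Set.mem_Ici.2 hs) hs
    have hF0 : F 0 = g 0 := by simp [hFdef]
    have hFs : F s ≤ 0 := hF.trans (hF0.le.trans hg0)
    have hFs' : Real.exp (2 * γ * s) * g s ≤ 0 := by simpa [hFdef] using hFs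
    have hep := Real.exp_pos (2 * γ * s)
    nlinarith [hFs', hep]
  -- the state never vanishes
  have hxne : ∀ s : ℝ, x s ≠ 0 := by
    intro s hx0
    apply hb
    have hcol : NormedSpace.exp (s • A) * b = 0 := by
      funext i j
      obtain rfl : j = 0 := Subsingleton.elim j 0
      simpa [hxdef] using congrFun hx0 i
    have hinv : NormedSpace.exp (-(s • A)) * NormedSpace.exp (s • A) = 1 := by
      rw [← Matrix.exp_add_of_commute _ _ ((Commute.refl (s • A)).neg_left),
        neg_add_cancel]
      exact NormedSpace.exp_zero
    calc b = 1 * b := (Matrix.one_mul b).symm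
      _ = NormedSpace.exp (-(s • A)) * NormedSpace.exp (s • A) * b := by rw [hinv]
      _ = NormedSpace.exp (-(s • A)) * (NormedSpace.exp (s • A) * b) := Matrix.mul_assoc _ _ _
      _ = 0 := by rw [hcol, Matrix.mul_zero]
  -- the output never vanishes for s ≥ 0
  have hfne : ∀ s : ℝ, 0 ≤ s → f s ≠ 0 := by
    intro s hs hf0
    have hp := h3.dotProduct_mulVec_pos (hxne s)
    rw [star_trivial] at hp
    have hsplit : x s ⬝ᵥ ((Q + cᵀ * c) *ᵥ x s) = g s + f s * f s := by
      rw [add_mulVec, dotProduct_add]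
      congr 1
      rw [← mulVec_mulVec, Matrix.dotProduct_mulVec, vecMul_transpose]
      simp [dotProduct, mulVec, hfdef, Finset.mul_sum]
    rw [hsplit, hf0] at hp
    have := hgs s hs
    linarith
  have hcont : ContinuousOn f (Set.Icc 0 t) :=
    fun u _ => (hfd u).continuousAt.continuousWithinAt
  have hf0pos : 0 < f 0 := by
    have hf0 : f 0 = (c * b) 0 0 := by
      have hx0 : x 0 = fun i => b i 0 := by
        funext i
        simp [hxdef, NormedSpace.exp_zero]
      rw [hfdef]
      simp only [hx0]
      rw [Matrix.mul_apply]
    rcases lt_or_eq_of_le h4 with h | h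
    · rwa [← hf0] at h
    · exact absurd (hf0.trans h.symm) (hfne 0 le_rfl)
  have hgoal : (c * NormedSpace.exp (t • A) * b) 0 0 = f t := by
    rw [Matrix.mul_assoc, Matrix.mul_apply]
  rw [hgoal]
  by_contra hneg
  push_neg at hneg
  have h0mem : (0 : ℝ) ∈ Set.Icc (f t) (f 0) := ⟨hneg.le, hf0pos.le⟩
  obtain ⟨s, hs, hfs⟩ := intermediate_value_Icc' ht hcont h0mem
  exact hfne s hs.1 hfs
end

section
/- Let β₁, β₂ ∈ ℝ and λ₁, λ₂ > 0, and define g(t) = β₁ e^{−λ₁ t} + β₂ e^{−λ₂ t}. Then g'(t)² − g(t)·g''(t) ≥ 0 for all t ≥ 0 if and only if g'(0)² − g(0)·g''(0) ≥ 0. -/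
private lemma aux_hasDerivAt (a b t : ℝ) :
    HasDerivAt (fun t : ℝ => a * Real.exp (b * t)) (a * b * Real.exp (b * t)) t := by
  have h1 : HasDerivAt (fun t : ℝ => b * t) b t := by
    simpa using (hasDerivAt_id t).const_mul b
  have h2 := (Real.hasDerivAt_exp (b * t)).comp t h1
  simpa [mul_comm, mul_assoc, mul_left_comm] using h2.const_mul a

/-- Test for second-order systems: for `g(t) = β₁ e^{−l₁ t} + β₂ e^{−l₂ t}`
with `l₁, l₂ > 0`, the log-concavity test `g'(t)² − g(t)·g''(t) ≥ 0` holds for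
all `t ≥ 0` if and only if it holds at `t = 0`. -/
theorem second_order_test (β₁ β₂ l₁ l₂ : ℝ) (hl₁ : 0 < l₁) (hl₂ : 0 < l₂) :
    let g : ℝ → ℝ := fun t => β₁ * Real.exp (-l₁ * t) + β₂ * Real.exp (-l₂ * t)
    (∀ t : ℝ, 0 ≤ t → 0 ≤ deriv g t ^ 2 - g t * deriv (deriv g) t) ↔
      0 ≤ deriv g 0 ^ 2 - g 0 * deriv (deriv g) 0 := by
  intro g
  have hdg : deriv g = fun t => β₁ * (-l₁) * Real.exp (-l₁ * t)
      + β₂ * (-l₂) * Real.exp (-l₂ * t) := by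
    funext t
    exact ((aux_hasDerivAt β₁ (-l₁) t).add (aux_hasDerivAt β₂ (-l₂) t)).deriv
  have hdg2 : deriv (deriv g) = fun t => β₁ * (-l₁) * (-l₁) * Real.exp (-l₁ * t)
      + β₂ * (-l₂) * (-l₂) * Real.exp (-l₂ * t) := by
    funext t
    rw [hdg]
    exact ((aux_hasDerivAt (β₁ * (-l₁)) (-l₁) t).add
      (aux_hasDerivAt (β₂ * (-l₂)) (-l₂) t)).deriv
  have key : ∀ t : ℝ, deriv g t ^ 2 - g t * deriv (deriv g) t =
      (deriv g 0 ^ 2 - g 0 * deriv (deriv g) 0) * (Real.exp (-l₁ * t) * Real.exp (-l₂ * t)) := by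
    intro t
    rw [hdg2, hdg]
    simp only [g, mul_zero, Real.exp_zero, mul_one]
    ring
  constructor
  · intro h; exact h 0 le_rfl
  · intro h t _
    rw [key t]
    exact mul_nonneg h (by positivity)
end

section
/- Let A ∈ ℝ^{n×n}, b ∈ ℝ^n, c ∈ ℝ^{1×n}, and define g(t) = c e^{At} b. Then for all t ∈ ℝ, g'(t)² − g(t)·g''(t) = (c ⊗ c) e^{(A ⊕ A)t} (Ab ⊗ Ab − b ⊗ A²b). In particular, g'(t)² − g(t)·g''(t) is the impulse response of the state-space model (Ā, b̄, c̄) with Ā = A ⊕ A, b̄ = Ab ⊗ Ab − b ⊗ A²b, c̄ = c ⊗ c. -/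
open Matrix Kronecker

attribute [local instance] Matrix.linftyOpNormedRing Matrix.linftyOpNormedAlgebra

namespace TestFunctionAux

variable {n : ℕ}

/-- `X ↦ X ⊗ₖ 1` as an algebra homomorphism. -/
noncomputable def kronL (n : ℕ) :
    Matrix (Fin n) (Fin n) ℝ →ₐ[ℝ] Matrix (Fin n × Fin n) (Fin n × Fin n) ℝ where
  toFun X := X ⊗ₖ (1 : Matrix (Fin n) (Fin n) ℝ)
  map_one' := Matrix.one_kronecker_one
  map_mul' X Y := by rw [← Matrix.mul_kronecker_mul, one_mul]
  map_zero' := by ext ⟨i, j⟩ ⟨k, l⟩; simp [Matrix.kroneckerMap_apply]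
  map_add' X Y := Matrix.add_kronecker X Y _
  commutes' r := by
    simp only [Algebra.algebraMap_eq_smul_one]
    rw [Matrix.smul_kronecker, Matrix.one_kronecker_one]

/-- `X ↦ 1 ⊗ₖ X` as an algebra homomorphism. -/
noncomputable def kronR (n : ℕ) :
    Matrix (Fin n) (Fin n) ℝ →ₐ[ℝ] Matrix (Fin n × Fin n) (Fin n × Fin n) ℝ where
  toFun X := (1 : Matrix (Fin n) (Fin n) ℝ) ⊗ₖ X
  map_one' := Matrix.one_kronecker_one
  map_mul' X Y := by rw [← Matrix.mul_kronecker_mul, one_mul]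
  map_zero' := by ext ⟨i, j⟩ ⟨k, l⟩; simp [Matrix.kroneckerMap_apply]
  map_add' X Y := Matrix.kronecker_add _ X Y
  commutes' r := by
    simp only [Algebra.algebraMap_eq_smul_one]
    rw [Matrix.kronecker_smul, Matrix.one_kronecker_one]

lemma continuous_kronL : Continuous (kronL n) :=
  LinearMap.continuous_of_finiteDimensional (kronL n).toLinearMap

lemma continuous_kronR : Continuous (kronR n) :=
  LinearMap.continuous_of_finiteDimensional (kronR n).toLinearMap

lemma exp_kroneckerSum (A : Matrix (Fin n) (Fin n) ℝ) (t : ℝ) :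
    NormedSpace.exp (t • kroneckerSum A A) =
      (NormedSpace.exp (t • A)) ⊗ₖ (NormedSpace.exp (t • A)) := by
  have h1 : t • kroneckerSum A A = (t • A) ⊗ₖ (1 : Matrix (Fin n) (Fin n) ℝ)
      + (1 : Matrix (Fin n) (Fin n) ℝ) ⊗ₖ (t • A) := by
    rw [kroneckerSum, smul_add, Matrix.smul_kronecker, Matrix.kronecker_smul]
  have hcomm : Commute ((t • A) ⊗ₖ (1 : Matrix (Fin n) (Fin n) ℝ))
      ((1 : Matrix (Fin n) (Fin n) ℝ) ⊗ₖ (t • A)) := by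
    unfold Commute SemiconjBy
    rw [← Matrix.mul_kronecker_mul, ← Matrix.mul_kronecker_mul, one_mul, mul_one]
  rw [h1]
  erw [NormedSpace.exp_add_of_commute hcomm]
  have hL : (kronL n) (NormedSpace.exp (t • A)) = NormedSpace.exp ((kronL n) (t • A)) :=
    NormedSpace.map_exp (kronL n) continuous_kronL _
  have hR : (kronR n) (NormedSpace.exp (t • A)) = NormedSpace.exp ((kronR n) (t • A)) :=
    NormedSpace.map_exp (kronR n) continuous_kronR _
  simp only [kronL, kronR, AlgHom.coe_mk, RingHom.coe_mk, MonoidHom.coe_mk, OneHom.coe_mk] at hL hR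
  erw [← hL, ← hR]
  rw [← Matrix.mul_kronecker_mul, one_mul, mul_one]

/-- Evaluation `M ↦ (c * M * b') 0 0` as a linear map. -/
noncomputable def evalLM (c : Matrix (Fin 1) (Fin n) ℝ) (b' : Matrix (Fin n) (Fin 1) ℝ) :
    Matrix (Fin n) (Fin n) ℝ →ₗ[ℝ] ℝ where
  toFun M := (c * M * b') 0 0
  map_add' M N := by simp [Matrix.mul_add, Matrix.add_mul]
  map_smul' r M := by simp [Matrix.mul_smul, Matrix.smul_mul]

lemma deriv_entry (A : Matrix (Fin n) (Fin n) ℝ) (c : Matrix (Fin 1) (Fin n) ℝ)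
    (b' : Matrix (Fin n) (Fin 1) ℝ) (t : ℝ) :
    HasDerivAt (fun t => (c * NormedSpace.exp (t • A) * b') 0 0)
      ((c * NormedSpace.exp (t • A) * (A * b')) 0 0) t := by
  have hE : HasDerivAt (fun u : ℝ => NormedSpace.exp (u • A))
      (NormedSpace.exp (t • A) * A) t := hasDerivAt_exp_smul_const A t
  have hL := LinearMap.continuous_of_finiteDimensional (evalLM c b')
  let L : Matrix (Fin n) (Fin n) ℝ →L[ℝ] ℝ := ⟨evalLM c b', hL⟩
  have := (L.hasFDerivAt.comp_hasDerivAt t hE)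
  exact this.congr_deriv (by show (c * (NormedSpace.exp (t • A) * A) * b') 0 0 = _; simp [Matrix.mul_assoc])

end TestFunctionAux

open TestFunctionAux in
/-- State-space characterization of the log-concavity test: for
`g(t) = c e^{At} b`, the function `g'(t)² − g(t)·g''(t)` is the impulse response
of the compound state-space model `(A ⊕ A, Ab ⊗ Ab − b ⊗ A²b, c ⊗ c)`. -/
theorem test_function_state_space {n : ℕ}
    (A : Matrix (Fin n) (Fin n) ℝ) (b : Matrix (Fin n) (Fin 1) ℝ)
    (c : Matrix (Fin 1) (Fin n) ℝ) :
    let g : ℝ → ℝ := fun t => (c * NormedSpace.exp (t • A) * b) 0 0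
    ∀ t : ℝ,
      deriv g t ^ 2 - g t * deriv (deriv g) t =
        ((c ⊗ₖ c) * NormedSpace.exp (t • kroneckerSum A A) *
          ((A * b) ⊗ₖ (A * b) - b ⊗ₖ (A * A * b))) (0, 0) (0, 0) := by
  intro g t
  have hg' : deriv g = fun t => (c * NormedSpace.exp (t • A) * (A * b)) 0 0 := by
    funext s
    exact (deriv_entry A c b s).deriv
  have hg'' : deriv (deriv g) t = (c * NormedSpace.exp (t • A) * (A * (A * b))) 0 0 := by
    rw [hg']
    exact (deriv_entry A c (A * b) t).deriv
  rw [hg'', hg']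
  rw [exp_kroneckerSum A t, Matrix.mul_sub, ← Matrix.mul_kronecker_mul,
    ← Matrix.mul_kronecker_mul, ← Matrix.mul_kronecker_mul]
  simp only [g, Matrix.sub_apply, Matrix.kroneckerMap_apply]
  rw [Matrix.mul_assoc A A b]
  ring
end

section
/- Let g : ℝ → ℝ be integrable and log-concave on ℝ, let u : ℝ → ℝ be nonnegative, bounded, measurable and quasiconcave, and let f : ℝ → ℝ be monotonically nondecreasing. Then the function t ↦ f((g ∗ u)(t)) is quasiconcave. -/
open MeasureTheory

/-- `f` is log-concave on a set `S`. -/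
def LogConcaveOn (S : Set ℝ) (f : ℝ → ℝ) : Prop :=
  (∀ x ∈ S, 0 ≤ f x) ∧
    ∀ x ∈ S, ∀ y ∈ S, ∀ l : ℝ, 0 ≤ l → l ≤ 1 →
      f x ^ l * f y ^ (1 - l) ≤ f (l * x + (1 - l) * y)

/-- `f` is quasiconcave (unimodal): `f(λx + (1−λ)y) ≥ min(f(x), f(y))`. -/
def Quasiconcave (f : ℝ → ℝ) : Prop :=
  ∀ x y : ℝ, ∀ l : ℝ, 0 ≤ l → l ≤ 1 → min (f x) (f y) ≤ f (l * x + (1 - l) * y)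

open Filter

lemma qc_between {u : ℝ → ℝ} (hu : Quasiconcave u) {a b c : ℝ} (hab : a ≤ b) (hbc : b ≤ c) :
    min (u a) (u c) ≤ u b := by
  rcases eq_or_lt_of_le (hab.trans hbc) with h | h
  · have hba : b = a := le_antisymm (h ▸ hbc) hab
    subst hba
    exact min_le_left _ _
  · have hca : (0:ℝ) < c - a := sub_pos.2 h
    set l := (c - b) / (c - a) with hl
    have hl0 : 0 ≤ l := div_nonneg (sub_nonneg.2 hbc) hca.le
    have hl1 : l ≤ 1 := by rw [hl, div_le_one hca]; linarith
    have hb : l * a + (1 - l) * c = b := by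
      rw [hl]
      field_simp
      ring
    have := hu a c l hl0 hl1
    rwa [hb] at this

lemma qc_diff {u : ℝ → ℝ} (hu : Quasiconcave u) {δ σ σ' : ℝ} (hδ : 0 < δ) (hσ : σ < σ')
    (h' : u σ' < u (σ' + δ)) : u σ ≤ u (σ + δ) := by
  by_contra hcon
  push_neg at hcon
  have h1 : min (u σ) (u (σ' + δ)) ≤ u (σ + δ) := qc_between hu (by linarith) (by linarith)
  have h2 : min (u σ) (u (σ' + δ)) ≤ u σ' := qc_between hu (by linarith) (by linarith)
  rcases le_total (u σ) (u (σ' + δ)) with hm | hm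
  · rw [min_eq_left hm] at h1; linarith
  · rw [min_eq_right hm] at h2; linarith

lemma rpow_split {x l : ℝ} (hx : 0 ≤ x) (h0 : 0 < l) (h1 : l < 1) :
    x ^ l * x ^ (1 - l) = x := by
  rcases eq_or_lt_of_le hx with h | h
  · rw [← h, Real.zero_rpow (ne_of_gt h0), zero_mul]
  · rw [← Real.rpow_add h, add_sub_cancel, Real.rpow_one]

lemma logConcave_tp2 {g : ℝ → ℝ} (hg : LogConcaveOn Set.univ g) {s t σ σ' : ℝ}
    (hst : s < t) (hσ : σ < σ') : g (t - σ) * g (s - σ') ≤ g (s - σ) * g (t - σ') := by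
  have hp : (0:ℝ) < t - s := sub_pos.2 hst
  have hq : (0:ℝ) < σ' - σ := sub_pos.2 hσ
  set l := (t - s) / ((t - s) + (σ' - σ)) with hl
  have hden : (0:ℝ) < (t - s) + (σ' - σ) := by linarith
  have hl0 : 0 < l := div_pos hp hden
  have hl1 : l < 1 := by rw [hl, div_lt_one hden]; linarith
  have hI1 : l * (s - σ') + (1 - l) * (t - σ) = s - σ := by
    rw [hl]
    field_simp
    ring
  have hI2 : (1 - l) * (s - σ') + (1 - (1 - l)) * (t - σ) = t - σ' := by
    rw [hl]
    field_simp
    ring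
  have h1 := hg.2 (s - σ') (Set.mem_univ _) (t - σ) (Set.mem_univ _) l hl0.le hl1.le
  have h2 := hg.2 (s - σ') (Set.mem_univ _) (t - σ) (Set.mem_univ _) (1 - l)
    (by linarith) (by linarith)
  rw [hI1] at h1
  rw [hI2] at h2
  have hO1 : 0 ≤ g (s - σ') := hg.1 _ (Set.mem_univ _)
  have hO2 : 0 ≤ g (t - σ) := hg.1 _ (Set.mem_univ _)
  have key : g (t - σ) * g (s - σ') =
      (g (s - σ') ^ l * g (t - σ) ^ (1 - l)) * (g (s - σ') ^ (1 - l) * g (t - σ) ^ (1 - (1 - l))) := by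
    have e1 := rpow_split hO1 hl0 hl1
    have e2 := rpow_split hO2 hl0 hl1
    have : (1 : ℝ) - (1 - l) = l := by ring
    rw [this]
    calc g (t - σ) * g (s - σ')
        = (g (s - σ') ^ l * g (s - σ') ^ (1 - l)) * (g (t - σ) ^ l * g (t - σ) ^ (1 - l)) := by
          rw [e1, e2, mul_comm]
      _ = (g (s - σ') ^ l * g (t - σ) ^ (1 - l)) * (g (s - σ') ^ (1 - l) * g (t - σ) ^ l) := by
          ring
  rw [key]
  exact mul_le_mul h1 h2
    (mul_nonneg (Real.rpow_nonneg hO1 _) (Real.rpow_nonneg hO2 _))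
    (hg.1 _ (Set.mem_univ _))

section
variable {g u : ℝ → ℝ} {C : ℝ} (hg_int : Integrable g)
  (hu_meas : Measurable u) (hC : ∀ t, |u t| ≤ C)

include hg_int in
lemma int_mul_aux {w : ℝ → ℝ} (hw : Measurable w) (hwb : ∃ D, ∀ x, |w x| ≤ D) (t : ℝ) :
    Integrable (fun σ => g (t - σ) * w σ) := by
  have h1 : Integrable (fun σ => g (t - σ)) := (integrable_comp_sub_left g t).mpr hg_int
  have h2 : Integrable (fun σ => w σ * g (t - σ)) :=
    h1.bdd_mul (c := hwb.choose) hw.aestronglyMeasurable (ae_of_all _ (fun x => by simpa [Real.norm_eq_abs] using hwb.choose_spec x))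
  simpa [mul_comm] using h2

include hg_int hu_meas hC in
lemma conv_diff (t δ : ℝ) :
    conv g u (t + δ) - conv g u t = ∫ σ : ℝ, g (t - σ) * (u (σ + δ) - u σ) := by
  have hshift : conv g u (t + δ) = ∫ σ : ℝ, g (t - σ) * u (σ + δ) := by
    rw [conv]
    rw [← MeasureTheory.integral_add_right_eq_self (μ := volume)
      (fun τ => g (t + δ - τ) * u τ) δ]
    congr 1
    ext σ
    congr 2
    ring
  have i1 : Integrable (fun σ => g (t - σ) * u (σ + δ)) :=
    int_mul_aux hg_int (hu_meas.comp (measurable_add_const δ))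
      ⟨C, fun x => hC _⟩ t
  have i2 : Integrable (fun σ => g (t - σ) * u σ) :=
    int_mul_aux hg_int hu_meas ⟨C, hC⟩ t
  rw [hshift, conv, ← integral_sub i1 i2]
  congr 1
  ext σ
  ring

include hg_int hu_meas hC in
lemma once_neg (hg : LogConcaveOn Set.univ g) (hu_qc : Quasiconcave u)
    {δ s t : ℝ} (hδ : 0 < δ) (hst : s ≤ t)
    (hs : conv g u (s + δ) < conv g u s) : conv g u (t + δ) ≤ conv g u t := by
  rcases eq_or_lt_of_le hst with rfl | hst
  · exact hs.le
  by_contra hcon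
  push_neg at hcon
  have hCnn : 0 ≤ C := le_trans (abs_nonneg _) (hC 0)
  set ψ : ℝ → ℝ := fun σ => u (σ + δ) - u σ with hψ
  set wp : ℝ → ℝ := fun σ => max (ψ σ) 0 with hwp
  set wm : ℝ → ℝ := fun σ => max (-ψ σ) 0 with hwm
  have hψ_meas : Measurable ψ := (hu_meas.comp (measurable_add_const δ)).sub hu_meas
  have hwp_meas : Measurable wp := hψ_meas.max measurable_const
  have hwm_meas : Measurable wm := hψ_meas.neg.max measurable_const
  have hψ_bdd : ∀ x, |ψ x| ≤ C + C := by
    intro x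
    have h1 := abs_le.1 (hC (x + δ))
    have h2 := abs_le.1 (hC x)
    exact abs_le.2 ⟨by simp only [hψ]; linarith, by simp only [hψ]; linarith⟩
  have habs : ∀ a : ℝ, |max a 0| ≤ |a| := by
    intro a
    rw [abs_of_nonneg (le_max_right a 0)]
    exact max_le (le_abs_self a) (abs_nonneg a)
  have hwp_bdd : ∃ D, ∀ x, |wp x| ≤ D :=
    ⟨C + C, fun x => le_trans (habs _) (hψ_bdd x)⟩
  have hwm_bdd : ∃ D, ∀ x, |wm x| ≤ D :=
    ⟨C + C, fun x => le_trans (habs _) (by rw [abs_neg]; exact hψ_bdd x)⟩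
  have ia : Integrable (fun σ => g (t - σ) * wp σ) := int_mul_aux hg_int hwp_meas hwp_bdd t
  have ib : Integrable (fun σ => g (t - σ) * wm σ) := int_mul_aux hg_int hwm_meas hwm_bdd t
  have ic : Integrable (fun σ => g (s - σ) * wp σ) := int_mul_aux hg_int hwp_meas hwp_bdd s
  have idd : Integrable (fun σ => g (s - σ) * wm σ) := int_mul_aux hg_int hwm_meas hwm_bdd s
  have hgpos : ∀ x, 0 ≤ g x := fun x => hg.1 x (Set.mem_univ x)
  have hsplit : ∀ σ, u (σ + δ) - u σ = wp σ - wm σ := by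
    intro σ
    simp only [hwp, hwm, hψ]
    rcases le_total (u (σ + δ) - u σ) 0 with h | h
    · rw [max_eq_right h, max_eq_left (by linarith)]; ring
    · rw [max_eq_left h, max_eq_right (by linarith)]; ring
  have eqt : conv g u (t + δ) - conv g u t
      = (∫ σ : ℝ, g (t - σ) * wp σ) - ∫ σ : ℝ, g (t - σ) * wm σ := by
    rw [conv_diff hg_int hu_meas hC t δ, ← integral_sub ia ib]
    congr 1
    ext σ
    rw [hsplit σ]
    ring
  have eqs : conv g u (s + δ) - conv g u s
      = (∫ σ : ℝ, g (s - σ) * wp σ) - ∫ σ : ℝ, g (s - σ) * wm σ := by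
    rw [conv_diff hg_int hu_meas hC s δ, ← integral_sub ic idd]
    congr 1
    ext σ
    rw [hsplit σ]
    ring
  have hAB : (∫ σ : ℝ, g (t - σ) * wm σ) < ∫ σ : ℝ, g (t - σ) * wp σ := by linarith
  have hDC : (∫ σ : ℝ, g (s - σ) * wp σ) < ∫ σ : ℝ, g (s - σ) * wm σ := by linarith
  have hB0 : 0 ≤ ∫ σ : ℝ, g (t - σ) * wm σ :=
    integral_nonneg fun σ => mul_nonneg (hgpos _) (le_max_right _ _)
  have hC0 : 0 ≤ ∫ σ : ℝ, g (s - σ) * wp σ :=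
    integral_nonneg fun σ => mul_nonneg (hgpos _) (le_max_right _ _)
  have keypt : ∀ σ σ' : ℝ,
      (g (t - σ) * wp σ) * (g (s - σ') * wm σ') ≤ (g (s - σ) * wp σ) * (g (t - σ') * wm σ') := by
    intro σ σ'
    rcases eq_or_lt_of_le (le_max_right (ψ σ) 0) with h | hp
    · have hz : wp σ = 0 := h.symm
      rw [hz]; simp
    rcases eq_or_lt_of_le (le_max_right (-ψ σ') 0) with h | hm
    · have hz : wm σ' = 0 := h.symm
      rw [hz]; simp
    have hψσ : 0 < ψ σ := by
      by_contra hh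
      push_neg at hh
      rw [max_eq_right hh] at hp
      exact lt_irrefl _ hp
    have hψσ' : ψ σ' < 0 := by
      by_contra hh
      push_neg at hh
      rw [max_eq_right (by linarith)] at hm
      exact lt_irrefl _ hm
    have hσσ' : σ < σ' := by
      by_contra hle
      push_neg at hle
      rcases eq_or_lt_of_le hle with rfl | hlt
      · simp only [hψ] at hψσ hψσ'; linarith
      · have hu' : u σ < u (σ + δ) := by simp only [hψ] at hψσ; linarith
        have := qc_diff hu_qc hδ hlt hu'
        simp only [hψ] at hψσ'
        linarith
    have htp := logConcave_tp2 hg hst hσσ'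
    calc (g (t - σ) * wp σ) * (g (s - σ') * wm σ')
        = (g (t - σ) * g (s - σ')) * (wp σ * wm σ') := by ring
      _ ≤ (g (s - σ) * g (t - σ')) * (wp σ * wm σ') :=
          mul_le_mul_of_nonneg_right htp (mul_nonneg (le_max_right _ _) (le_max_right _ _))
      _ = (g (s - σ) * wp σ) * (g (t - σ') * wm σ') := by ring
  have step1 : ∀ σ : ℝ,
      (g (t - σ) * wp σ) * (∫ σ' : ℝ, g (s - σ') * wm σ')
        ≤ (g (s - σ) * wp σ) * (∫ σ' : ℝ, g (t - σ') * wm σ') := by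
    intro σ
    rw [← MeasureTheory.integral_const_mul, ← MeasureTheory.integral_const_mul]
    exact integral_mono (idd.const_mul _) (ib.const_mul _) (fun σ' => keypt σ σ')
  have step2 : (∫ σ : ℝ, g (t - σ) * wp σ) * (∫ σ' : ℝ, g (s - σ') * wm σ')
      ≤ (∫ σ : ℝ, g (s - σ) * wp σ) * (∫ σ' : ℝ, g (t - σ') * wm σ') := by
    rw [← MeasureTheory.integral_mul_const, ← MeasureTheory.integral_mul_const]
    exact integral_mono (ia.mul_const _) (ic.mul_const _) step1
  have hA0 : 0 < ∫ σ : ℝ, g (t - σ) * wp σ := lt_of_le_of_lt hB0 hAB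
  have hD0 : 0 < ∫ σ : ℝ, g (s - σ) * wm σ := lt_of_le_of_lt hC0 hDC
  nlinarith [step2, hAB, hDC, hB0, hC0, hA0, hD0]

include hg_int hu_meas hC in
lemma conv_cont : Continuous (conv g u) := by
  have hCnn : 0 ≤ C := le_trans (abs_nonneg _) (hC 0)
  apply continuous_of_uniform_approx_of_continuous
  intro U hU
  obtain ⟨ε, hε, hball⟩ := Metric.mem_uniformity_dist.1 hU
  obtain ⟨g', hg'supp, hg'near, hg'cont, hg'int⟩ :=
    hg_int.exists_hasCompactSupport_integral_sub_le (show (0:ℝ) < ε / (2 * (C + 1)) by positivity)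
  refine ⟨conv g' u, ?_, ?_⟩
  · have hu_loc : LocallyIntegrable u volume :=
      (memLp_top_of_bound hu_meas.aestronglyMeasurable C
        (Filter.Eventually.of_forall (fun x => by
          simpa [Real.norm_eq_abs] using hC x))).locallyIntegrable le_top
    have hconv : conv g' u = convolution u g' (ContinuousLinearMap.mul ℝ ℝ) volume := by
      ext t
      rw [conv, convolution]
      congr 1
      ext τ
      simp [mul_comm]
    rw [hconv]
    exact hg'supp.continuous_convolution_right _ hu_loc hg'cont
  · intro t
    apply hball
    have i1 : Integrable (fun τ => g (t - τ) * u τ) := int_mul_aux hg_int hu_meas ⟨C, hC⟩ t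
    have i2 : Integrable (fun τ => g' (t - τ) * u τ) := int_mul_aux hg'int hu_meas ⟨C, hC⟩ t
    have hdiff : conv g u t - conv g' u t = ∫ τ : ℝ, (g (t - τ) - g' (t - τ)) * u τ := by
      rw [conv, conv, ← integral_sub i1 i2]
      congr 1
      ext τ
      ring
    have idiff : Integrable (fun τ : ℝ => (g (t - τ) - g' (t - τ)) * u τ) := by
      have := int_mul_aux (hg_int.sub hg'int) hu_meas ⟨C, hC⟩ t
      simpa [Pi.sub_apply, sub_mul] using this
    have inorm : Integrable (fun τ : ℝ => |g (t - τ) - g' (t - τ)|) := by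
      have : Integrable (fun τ : ℝ => (g - g') (t - τ)) :=
        (integrable_comp_sub_left (g - g') t).mpr (hg_int.sub hg'int)
      simpa [Pi.sub_apply] using this.abs
    have h1 : |∫ τ : ℝ, (g (t - τ) - g' (t - τ)) * u τ|
        ≤ ∫ τ : ℝ, |g (t - τ) - g' (t - τ)| * |u τ| := by
      simpa [Real.norm_eq_abs, abs_mul] using
        norm_integral_le_integral_norm (μ := volume) (fun τ : ℝ => (g (t - τ) - g' (t - τ)) * u τ)
    have iabs : Integrable (fun τ : ℝ => |g (t - τ) - g' (t - τ)| * |u τ|) := by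
      simpa [abs_mul] using idiff.abs
    have h2 : (∫ τ : ℝ, |g (t - τ) - g' (t - τ)| * |u τ|)
        ≤ ∫ τ : ℝ, |g (t - τ) - g' (t - τ)| * C := by
      apply integral_mono iabs (inorm.mul_const C)
      intro τ
      dsimp only
      exact mul_le_mul_of_nonneg_left (hC τ) (abs_nonneg _)
    have h3 : (∫ τ : ℝ, |g (t - τ) - g' (t - τ)| * C)
        = (∫ x : ℝ, |g x - g' x|) * C := by
      rw [MeasureTheory.integral_mul_const]
      congr 1
      exact MeasureTheory.integral_sub_left_eq_self (fun x => |g x - g' x|) volume t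
    have h4 : (∫ x : ℝ, |g x - g' x|) ≤ ε / (2 * (C + 1)) := by
      simpa [Real.norm_eq_abs] using hg'near
    have h5 : (ε / (2 * (C + 1))) * C < ε := by
      rw [div_mul_eq_mul_div, div_lt_iff₀ (by positivity)]
      nlinarith
    rw [Real.dist_eq]
    calc |conv g u t - conv g' u t| ≤ (∫ x : ℝ, |g x - g' x|) * C := by
          rw [hdiff]; exact le_trans h1 (le_trans h2 (le_of_eq h3))
      _ ≤ (ε / (2 * (C + 1))) * C := mul_le_mul_of_nonneg_right h4 hCnn
      _ < ε := h5
end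

lemma grid_min (h : ℝ → ℝ)
    (honce : ∀ {δ s t : ℝ}, 0 < δ → s ≤ t → h (s + δ) < h s → h (t + δ) ≤ h t)
    {x y : ℝ} (hxy : x < y) (n : ℕ) (hn : 0 < n) (k : ℕ) (hk : k ≤ n) :
    min (h x) (h y) ≤ h (x + k * ((y - x) / n)) := by
  set d := (y - x) / n with hd
  have hn' : (0:ℝ) < n := by exact_mod_cast hn
  have hd0 : 0 < d := div_pos (by linarith) hn'
  have hyn : x + n * d = y := by
    rw [hd]
    field_simp
    ring
  by_contra hcon
  push_neg at hcon
  have hlt1 : h (x + k * d) < h x := lt_of_lt_of_le hcon (min_le_left _ _)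
  have hlt2 : h (x + k * d) < h y := lt_of_lt_of_le hcon (min_le_right _ _)
  have hdesc : ∃ j : ℕ, j < k ∧ h (x + (j + 1 : ℕ) * d) < h (x + j * d) := by
    by_contra hno
    push_neg at hno
    have mono : ∀ j : ℕ, j ≤ k → h x ≤ h (x + j * d) := by
      intro j
      induction j with
      | zero => intro _; simp
      | succ i ih =>
        intro hik
        have h1 : h x ≤ h (x + i * d) := ih (by omega)
        have h2 := hno i (by omega)
        linarith
    exact absurd (mono k le_rfl) (not_le.2 hlt1)
  obtain ⟨j, hjk, hj⟩ := hdesc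
  have hstart : h ((x + j * d) + d) < h (x + j * d) := by
    have he : x + ((j + 1 : ℕ) : ℝ) * d = (x + j * d) + d := by push_cast; ring
    rwa [he] at hj
  have chain : ∀ i : ℕ, k ≤ i → i ≤ n → h (x + i * d) ≤ h (x + k * d) := by
    intro i
    induction i with
    | zero =>
      intro h1 _
      have : k = 0 := Nat.le_zero.1 h1
      rw [this]
    | succ m ih =>
      intro h1 h2
      rcases Nat.lt_or_ge m k with hlt | hge
      · have : k = m + 1 := by omega
        rw [this]
      · have hm := ih hge (by omega)
        have hjm : (j:ℝ) * d ≤ (m:ℝ) * d := by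
          apply mul_le_mul_of_nonneg_right _ hd0.le
          exact_mod_cast Nat.le_of_lt (lt_of_lt_of_le hjk hge)
        have hstep : h ((x + m * d) + d) ≤ h (x + m * d) :=
          honce hd0 (by linarith) hstart
        have he : x + ((m + 1 : ℕ) : ℝ) * d = (x + m * d) + d := by push_cast; ring
        rw [he]
        linarith
  have hfin := chain n hk (le_refl n)
  rw [hyn] at hfin
  linarith

lemma min_le_of_icc (h : ℝ → ℝ) (hcont : Continuous h)
    (hgrid : ∀ x y : ℝ, x < y → ∀ n : ℕ, 0 < n → ∀ k : ℕ, k ≤ n →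
      min (h x) (h y) ≤ h (x + k * ((y - x) / n)))
    {x y l : ℝ} (hxy : x < y) (hl0 : 0 ≤ l) (hl1 : l ≤ 1) :
    min (h x) (h y) ≤ h (l * x + (1 - l) * y) := by
  set ρ := 1 - l with hρ
  have hρ0 : 0 ≤ ρ := by linarith
  have hρ1 : ρ ≤ 1 := by linarith
  have hyx : (0:ℝ) < y - x := by linarith
  have hz : l * x + (1 - l) * y = x + ρ * (y - x) := by rw [hρ]; ring
  rw [hz]
  set z := x + ρ * (y - x) with hzd
  set K : ℕ → ℕ := fun n => ⌊((n:ℝ) + 1) * ρ⌋₊ with hK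
  set w : ℕ → ℝ := fun n => x + (K n) * ((y - x) / ((n:ℕ) + 1 : ℕ)) with hw
  have hmem : ∀ n : ℕ, min (h x) (h y) ≤ h (w n) := by
    intro n
    have hkn : K n ≤ n + 1 := by
      have h1 : ((n:ℝ) + 1) * ρ ≤ ((n + 1 : ℕ) : ℝ) := by push_cast; nlinarith
      calc K n = ⌊((n:ℝ) + 1) * ρ⌋₊ := rfl
        _ ≤ ⌊((n + 1 : ℕ) : ℝ)⌋₊ := Nat.floor_mono h1
        _ = n + 1 := Nat.floor_natCast _
    exact hgrid x y hxy (n + 1) (Nat.succ_pos n) (K n) hkn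
  have hdist : ∀ n : ℕ, dist (w n) z ≤ (y - x) / ((n:ℝ) + 1) := by
    intro n
    have hpos : (0:ℝ) < (n:ℝ) + 1 := by positivity
    have hfl1 : ((K n : ℝ)) ≤ ((n:ℝ) + 1) * ρ := Nat.floor_le (by positivity)
    have hfl2 : ((n:ℝ) + 1) * ρ < (K n : ℝ) + 1 := Nat.lt_floor_add_one _
    rw [Real.dist_eq]
    have he : w n - z = ((K n : ℝ) - ((n:ℝ) + 1) * ρ) * ((y - x) / ((n:ℝ) + 1)) := by
      rw [hw, hzd]
      push_cast
      field_simp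
      ring
    rw [he, abs_mul]
    have h1 : |(K n : ℝ) - ((n:ℝ) + 1) * ρ| ≤ 1 := by
      rw [abs_le]
      constructor <;> linarith
    have h2 : |(y - x) / ((n:ℝ) + 1)| = (y - x) / ((n:ℝ) + 1) :=
      abs_of_nonneg (by positivity)
    rw [h2]
    nlinarith [abs_nonneg ((K n : ℝ) - ((n:ℝ) + 1) * ρ), div_pos hyx hpos]
  have htend0 : Tendsto (fun n : ℕ => (y - x) / ((n:ℝ) + 1)) atTop (nhds 0) := by
    have := tendsto_one_div_add_atTop_nhds_zero_nat (𝕜 := ℝ)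
    have h2 := this.const_mul (y - x)
    simpa [div_eq_mul_inv, mul_comm, mul_assoc, one_div] using h2
  have hwz : Tendsto w atTop (nhds z) := by
    rw [tendsto_iff_dist_tendsto_zero]
    exact squeeze_zero (fun n => dist_nonneg) hdist htend0
  have htends : Tendsto (fun n => h (w n)) atTop (nhds (h z)) :=
    ((hcont.tendsto z).comp hwz)
  exact ge_of_tendsto' htends hmem

/-- Serial interconnection of a strongly unimodal LTI system (log-concave
integrable impulse response `g`) with a static monotone nonlinearity `f` maps
quasiconcave inputs to quasiconcave outputs. -/
theorem serial_interconnection_strongly_unimodal (g u f : ℝ → ℝ)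
    (hg_int : Integrable g) (hg : LogConcaveOn Set.univ g)
    (hu_nonneg : ∀ t, 0 ≤ u t) (hu_bdd : ∃ C : ℝ, ∀ t, |u t| ≤ C)
    (hu_meas : Measurable u) (hu_qc : Quasiconcave u)
    (hf : Monotone f) :
    Quasiconcave (fun t => f (conv g u t)) := by
  obtain ⟨C, hC⟩ := hu_bdd
  have hcont : Continuous (conv g u) := conv_cont hg_int hu_meas hC
  have hgrid : ∀ x y : ℝ, x < y → ∀ n : ℕ, 0 < n → ∀ k : ℕ, k ≤ n →
      min (conv g u x) (conv g u y) ≤ conv g u (x + k * ((y - x) / n)) := by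
    intro x y hxy n hn k hk
    exact grid_min (conv g u)
      (fun hδ hst hs => once_neg hg_int hu_meas hC hg hu_qc hδ hst hs) hxy n hn k hk
  have key : ∀ x y l : ℝ, 0 ≤ l → l ≤ 1 →
      min (conv g u x) (conv g u y) ≤ conv g u (l * x + (1 - l) * y) := by
    intro x y l hl0 hl1
    rcases lt_trichotomy x y with hxy | rfl | hxy
    · exact min_le_of_icc (conv g u) hcont hgrid hxy hl0 hl1
    · have he : l * x + (1 - l) * x = x := by ring
      rw [he, min_self]
    · have h2 := min_le_of_icc (conv g u) hcont hgrid hxy (by linarith : (0:ℝ) ≤ 1 - l)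
        (by linarith : (1:ℝ) - l ≤ 1)
      have he : (1 - l) * y + (1 - (1 - l)) * x = l * x + (1 - l) * y := by ring
      rw [he, min_comm] at h2
      exact h2
  intro x y l hl0 hl1
  have h1 := key x y l hl0 hl1
  calc min (f (conv g u x)) (f (conv g u y))
      = f (min (conv g u x) (conv g u y)) := (hf.map_min).symm
    _ ≤ f (conv g u (l * x + (1 - l) * y)) := hf h1
end

section
/- Let n ≥ 2, let b₁, …, b_n > 0 and α₁, …, α_n > 0 with α_i ≠ α_{i+1} for all i = 1, …, n−1, and define g(t) = Σ_{i=1}^n b_i e^{−α_i t}. Then g'(t)² − g(t)·g''(t) < 0 for all t ≥ 0. Consequently, g is nonnegative but not log-concave on [0,∞), so the parallel interconnection of strongly unimodal first-order LTI systems need not be strongly unimodal. -/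
lemma strict_cs {n : ℕ} (a x : Fin n → ℝ) (hx : ∀ i, 0 < x i) (i0 j0 : Fin n)
    (hne : a i0 ≠ a j0) :
    (∑ i, a i * x i)^2 < (∑ i, x i) * (∑ i, a i^2 * x i) := by
  have hid : ∑ i, ∑ j, x i * x j * (a i - a j)^2
      = 2 * ((∑ i, x i) * (∑ i, a i^2 * x i) - (∑ i, a i * x i)^2) := by
    have h1 : ∑ i, ∑ j, x i * x j * (a i - a j)^2
        = (∑ i, ∑ j, x j * (a i^2 * x i)) + (∑ i, ∑ j, x i * (a j^2 * x j))
          - 2 * ∑ i, ∑ j, (a i * x i) * (a j * x j) := by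
      rw [Finset.mul_sum, ← Finset.sum_add_distrib, ← Finset.sum_sub_distrib]
      apply Finset.sum_congr rfl; intro i _
      rw [Finset.mul_sum, ← Finset.sum_add_distrib, ← Finset.sum_sub_distrib]
      apply Finset.sum_congr rfl; intro j _; ring
    have h2 : ∑ i, ∑ j, x j * (a i^2 * x i) = (∑ i, x i) * (∑ i, a i^2 * x i) := by
      rw [Finset.sum_comm, Finset.sum_mul_sum]
    have h3 : ∑ i, ∑ j, x i * (a j^2 * x j) = (∑ i, x i) * (∑ i, a i^2 * x i) := by
      rw [Finset.sum_mul_sum]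
    have h4 : ∑ i, ∑ j, (a i * x i) * (a j * x j) = (∑ i, a i * x i)^2 := by
      rw [sq, Finset.sum_mul_sum]
    rw [h1, h2, h3, h4]; ring
  have hpos : 0 < ∑ i, ∑ j, x i * x j * (a i - a j)^2 := by
    have hterm : ∀ i j : Fin n, 0 ≤ x i * x j * (a i - a j)^2 := fun i j =>
      mul_nonneg (mul_nonneg (hx i).le (hx j).le) (sq_nonneg _)
    apply Finset.sum_pos' (fun i _ => Finset.sum_nonneg fun j _ => hterm i j)
    refine ⟨i0, Finset.mem_univ _, ?_⟩
    apply Finset.sum_pos' (fun j _ => hterm i0 j)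
    refine ⟨j0, Finset.mem_univ _, ?_⟩
    have h5 : (0:ℝ) < (a i0 - a j0)^2 := by
      have := sub_ne_zero.mpr hne
      positivity
    exact mul_pos (mul_pos (hx i0) (hx j0)) h5
  nlinarith [hid, hpos]

/-- Parallel interconnections of strongly unimodal first-order systems are not
strongly unimodal: for `g(t) = Σᵢ bᵢ e^{−αᵢ t}` with positive coefficients and
rates, consecutive rates distinct, the test `g'² − g·g''` is strictly negative
on `[0,∞)`; hence `g` is nonnegative but not log-concave on `[0,∞)`. -/
theorem parallel_not_strongly_unimodal {n : ℕ} (hn : 2 ≤ n) (b a : Fin n → ℝ)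
    (hb : ∀ i, 0 < b i) (ha : ∀ i, 0 < a i)
    (ha_ne : ∀ i j : Fin n, (j : ℕ) = (i : ℕ) + 1 → a i ≠ a j) :
    let g : ℝ → ℝ := fun t => ∑ i, b i * Real.exp (-a i * t)
    (∀ t : ℝ, 0 ≤ t → deriv g t ^ 2 - g t * deriv (deriv g) t < 0) ∧
      (∀ t : ℝ, 0 ≤ t → 0 ≤ g t) ∧ ¬ LogConcaveOn (Set.Ici 0) g := by
  intro g
  -- basic positivity
  have hxpos : ∀ (t : ℝ) (i : Fin n), 0 < b i * Real.exp (-a i * t) := fun t i =>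
    mul_pos (hb i) (Real.exp_pos _)
  have hne0 : (Finset.univ : Finset (Fin n)).Nonempty :=
    ⟨⟨0, by omega⟩, Finset.mem_univ _⟩
  have hgpos : ∀ t, 0 < g t := fun t =>
    Finset.sum_pos (fun i _ => hxpos t i) hne0
  -- derivative machinery
  have hD : ∀ (c : Fin n → ℝ) (t : ℝ),
      HasDerivAt (fun t => ∑ i, c i * Real.exp (-a i * t))
        (∑ i, (-a i * c i) * Real.exp (-a i * t)) t := by
    intro c t
    apply HasDerivAt.fun_sum
    intro i _
    have h1 : HasDerivAt (fun t : ℝ => -a i * t) (-a i) t := by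
      simpa using (hasDerivAt_id t).const_mul (-a i)
    have h2 := (h1.exp).const_mul (c i)
    exact h2.congr_deriv (by ring)
  set g1 : ℝ → ℝ := fun t => ∑ i, (-a i * b i) * Real.exp (-a i * t) with hg1def
  set g2 : ℝ → ℝ := fun t => ∑ i, (-a i * (-a i * b i)) * Real.exp (-a i * t) with hg2def
  have hgd : ∀ t, HasDerivAt g (g1 t) t := fun t => hD b t
  have hg1d : ∀ t, HasDerivAt g1 (g2 t) t := fun t => hD (fun i => -a i * b i) t
  have hderiv1 : deriv g = g1 := funext fun t => (hgd t).deriv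
  have hderiv2 : deriv (deriv g) = g2 := by
    rw [hderiv1]; exact funext fun t => (hg1d t).deriv
  -- the key strict inequality
  obtain ⟨i0, j0, hne⟩ : ∃ i0 j0 : Fin n, a i0 ≠ a j0 := by
    refine ⟨⟨0, by omega⟩, ⟨1, by omega⟩, ha_ne _ _ rfl⟩
  have key : ∀ t : ℝ, g1 t ^ 2 - g t * g2 t < 0 := by
    intro t
    have hcs := strict_cs a (fun i => b i * Real.exp (-a i * t))
      (fun i => hxpos t i) i0 j0 hne
    have e1 : g1 t = -∑ i, a i * (b i * Real.exp (-a i * t)) := by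
      rw [hg1def, ← Finset.sum_neg_distrib]
      exact Finset.sum_congr rfl fun i _ => by ring
    have e2 : g2 t = ∑ i, a i ^ 2 * (b i * Real.exp (-a i * t)) := by
      rw [hg2def]
      exact Finset.sum_congr rfl fun i _ => by ring
    have e3 : g t = ∑ i, b i * Real.exp (-a i * t) := rfl
    rw [e1, e2, e3]
    nlinarith [hcs]
  refine ⟨fun t _ => by rw [hderiv2, hderiv1]; exact key t, fun t _ => (hgpos t).le, ?_⟩
  -- not log-concave
  rintro ⟨-, hineq⟩
  -- strict convexity of log ∘ g
  have hgc : Continuous g := by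
    have : Differentiable ℝ g := fun t => (hgd t).differentiableAt
    exact this.continuous
  have hlogd : ∀ t, HasDerivAt (fun t => Real.log (g t)) (g1 t / g t) t := fun t =>
    (hgd t).log (hgpos t).ne'
  have hlogd2 : ∀ t, HasDerivAt (fun t => g1 t / g t)
      ((g2 t * g t - g1 t * g1 t) / g t ^ 2) t := fun t =>
    (hg1d t).div (hgd t) (hgpos t).ne'
  have hconv : StrictConvexOn ℝ (Set.Ici (0:ℝ)) (fun t => Real.log (g t)) := by
    apply strictConvexOn_of_deriv2_pos (convex_Ici 0)
    · exact (Real.continuousOn_log.comp hgc.continuousOn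
        fun t _ => Set.mem_compl_singleton_iff.mpr (hgpos t).ne')
    · intro t _
      have hd1 : deriv (fun t => Real.log (g t)) = fun t => g1 t / g t :=
        funext fun t => (hlogd t).deriv
      have : deriv^[2] (fun t => Real.log (g t)) t
          = (g2 t * g t - g1 t * g1 t) / g t ^ 2 := by
        show deriv (deriv (fun t => Real.log (g t))) t = _
        rw [hd1]
        exact (hlogd2 t).deriv
      rw [this]
      have := key t
      have hg := hgpos t
      have : 0 < g2 t * g t - g1 t * g1 t := by nlinarith
      positivity
  -- derive the contradiction at points 0, 1, 2
  have h0 : (0:ℝ) ∈ Set.Ici (0:ℝ) := Set.mem_Ici.mpr le_rfl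
  have h2' : (2:ℝ) ∈ Set.Ici (0:ℝ) := by norm_num
  have hstrict := hconv.2 h0 h2' (by norm_num : (0:ℝ) ≠ 2)
    (by norm_num : (0:ℝ) < 1/2) (by norm_num : (0:ℝ) < 1/2) (by norm_num)
  have hco := hineq 0 h0 2 h2' (1/2) (by norm_num) (by norm_num)
  have hmid : (1/2 : ℝ) * 0 + (1 - 1/2) * 2 = 1 := by norm_num
  rw [hmid] at hco
  have hsm : (1/2 : ℝ) • (0:ℝ) + (1/2 : ℝ) • (2:ℝ) = 1 := by norm_num
  rw [hsm] at hstrict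
  -- hco : g 0 ^ (1/2:ℝ) * g 2 ^ (1 - 1/2:ℝ) ≤ g 1
  have hlog : (1/2 : ℝ) * Real.log (g 0) + (1/2 : ℝ) * Real.log (g 2) ≤ Real.log (g 1) := by
    have hp0 := Real.rpow_pos_of_pos (hgpos 0) (1/2 : ℝ)
    have hp2 := Real.rpow_pos_of_pos (hgpos 2) (1 - 1/2 : ℝ)
    have := Real.log_le_log (mul_pos hp0 hp2) hco
    rwa [Real.log_mul hp0.ne' hp2.ne',
      Real.log_rpow (hgpos 0), Real.log_rpow (hgpos 2), show (1 - 1/2 : ℝ) = 1/2 by norm_num]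
      at this
  simp only [smul_eq_mul] at hstrict
  linarith
end

section
/- Let n ≥ 1, let b₁, …, b_n > 0 and α₁, …, α_n > 0 satisfy 2(α₁ − α_j)² ≥ max_{1 ≤ i ≤ n} (α_i − α_j)² for all j ≥ 2, and define g(t) = b₁ e^{−α₁ t} − Σ_{i=2}^n b_i e^{−α_i t}. Then g(t) ≥ 0 for all t ≥ 0 if and only if g restricted to [0,∞) is log-concave on [0,∞). In particular, if g(t) ≥ 0 for all t ≥ 0, then g'(t)² − g(t)·g''(t) ≥ 0 for all t ≥ 0. -/
private lemma quad_sum' {ι : Type*} (s : Finset ι) (u v : ι → ℝ) :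
    (∑ i ∈ s, ∑ j ∈ s, (u i - u j)^2 * (v i * v j)) =
      2*((∑ i ∈ s, (u i)^2 * v i) * (∑ i ∈ s, v i) - (∑ i ∈ s, u i * v i)^2) := by
  calc (∑ i ∈ s, ∑ j ∈ s, (u i - u j)^2 * (v i * v j))
      = ∑ i ∈ s, ∑ j ∈ s, (((u i)^2 * v i) * v j + v i * ((u j)^2 * v j)
          - 2*((u i * v i) * (u j * v j))) := by
        exact Finset.sum_congr rfl fun i _ => Finset.sum_congr rfl fun j _ => by ring
    _ = _ := by
        simp only [Finset.sum_add_distrib, Finset.sum_sub_distrib, ← Finset.mul_sum,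
          ← Finset.sum_mul]
        ring

private lemma S2_eq' {ι : Type*} (s : Finset ι) (a0 : ℝ) (a E : ι → ℝ) :
    (∑ i ∈ s, (a0 - a i)^2 * E i) =
      a0^2 * (∑ i ∈ s, E i) - 2*a0*(∑ i ∈ s, a i * E i) + (∑ i ∈ s, (a i)^2 * E i) := by
  calc (∑ i ∈ s, (a0 - a i)^2 * E i)
      = ∑ i ∈ s, (a0^2 * E i - 2*a0*(a i * E i) + (a i)^2 * E i) :=
        Finset.sum_congr rfl fun i _ => by ring
    _ = _ := by
        simp only [Finset.sum_add_distrib, Finset.sum_sub_distrib, ← Finset.mul_sum]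

private lemma fact_eq' {ι : Type*} (s : Finset ι) (a0 : ℝ) (a E : ι → ℝ) :
    (∑ i ∈ s, ∑ j ∈ s, 2*(a0 - a j)^2 * (E i * E j)) =
      2 * (∑ i ∈ s, E i) * (∑ j ∈ s, (a0 - a j)^2 * E j) := by
  calc (∑ i ∈ s, ∑ j ∈ s, 2*(a0 - a j)^2 * (E i * E j))
      = ∑ i ∈ s, (2 * E i) * (∑ j ∈ s, (a0 - a j)^2 * E j) := by
        refine Finset.sum_congr rfl fun i _ => ?_
        rw [Finset.mul_sum]
        exact Finset.sum_congr rfl fun j _ => by ring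
    _ = _ := by rw [← Finset.sum_mul, ← Finset.mul_sum]

private lemma key_ineq' {ι : Type*} (s : Finset ι) (a0 : ℝ) (a E : ι → ℝ)
    (hE : ∀ i ∈ s, 0 < E i)
    (hsp : ∀ j ∈ s, ∀ i ∈ s, (a i - a j)^2 ≤ 2*(a0 - a j)^2)
    (E0 : ℝ) (hg : ∑ i ∈ s, E i ≤ E0) :
    0 ≤ (-a0 * E0 + ∑ i ∈ s, a i * E i)^2 -
      (E0 - ∑ i ∈ s, E i) * (a0^2 * E0 - ∑ i ∈ s, (a i)^2 * E i) := by
  have hq := quad_sum' s a E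
  have hf := fact_eq' s a0 a E
  have hS2 := S2_eq' s a0 a E
  have hb : (∑ i ∈ s, ∑ j ∈ s, (a i - a j)^2 * (E i * E j)) ≤
      ∑ i ∈ s, ∑ j ∈ s, 2*(a0 - a j)^2 * (E i * E j) := by
    refine Finset.sum_le_sum fun i hi => Finset.sum_le_sum fun j hj => ?_
    exact mul_le_mul_of_nonneg_right (hsp j hj i hi)
      (mul_nonneg (hE i hi).le (hE j hj).le)
  set A := ∑ i ∈ s, E i with hA
  set B := ∑ i ∈ s, a i * E i with hB
  set C := ∑ i ∈ s, (a i)^2 * E i with hC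
  set S2 := ∑ j ∈ s, (a0 - a j)^2 * E j with hS2d
  have hS2nn : 0 ≤ S2 := Finset.sum_nonneg fun j hj =>
    mul_nonneg (sq_nonneg _) (hE j hj).le
  have hCA : C * A - B^2 ≤ A * S2 := by nlinarith [hq, hb, hf]
  have hAS : A * S2 ≤ E0 * S2 := mul_le_mul_of_nonneg_right hg hS2nn
  have hid : (-a0 * E0 + B)^2 - (E0 - A) * (a0^2 * E0 - C) = E0 * S2 + (B^2 - A*C) := by
    rw [hS2]; ring
  linarith [hid, hCA, hAS]

private lemma key_eq' {ι : Type*} (s : Finset ι) (a0 : ℝ) (a E : ι → ℝ)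
    (hE : ∀ i ∈ s, 0 < E i)
    (hsp : ∀ j ∈ s, ∀ i ∈ s, (a i - a j)^2 ≤ 2*(a0 - a j)^2)
    (E0 : ℝ) (h1 : E0 = ∑ i ∈ s, E i) (h2 : (∑ i ∈ s, a i * E i) = a0 * E0) :
    ∀ j ∈ s, a j = a0 := by
  have hq := quad_sum' s a E
  have hf := fact_eq' s a0 a E
  have hS2 := S2_eq' s a0 a E
  have hzero : (∑ i ∈ s, ∑ j ∈ s, (2*(a0 - a j)^2 - (a i - a j)^2) * (E i * E j)) = 0 := by
    have hsplit : (∑ i ∈ s, ∑ j ∈ s, (2*(a0 - a j)^2 - (a i - a j)^2) * (E i * E j)) =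
        (∑ i ∈ s, ∑ j ∈ s, 2*(a0 - a j)^2 * (E i * E j)) -
          (∑ i ∈ s, ∑ j ∈ s, (a i - a j)^2 * (E i * E j)) := by
      rw [← Finset.sum_sub_distrib]
      refine Finset.sum_congr rfl fun i _ => ?_
      rw [← Finset.sum_sub_distrib]
      exact Finset.sum_congr rfl fun j _ => by ring
    rw [hsplit, hf, hq, hS2, h2, h1]
    ring
  have hnn : ∀ i ∈ s, 0 ≤ ∑ j ∈ s, (2*(a0 - a j)^2 - (a i - a j)^2) * (E i * E j) := by
    intro i hi
    refine Finset.sum_nonneg fun j hj => mul_nonneg (by linarith [hsp j hj i hi])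
      (mul_nonneg (hE i hi).le (hE j hj).le)
  have houter := (Finset.sum_eq_zero_iff_of_nonneg hnn).1 hzero
  intro j hj
  have hinner := (Finset.sum_eq_zero_iff_of_nonneg fun k hk =>
      mul_nonneg (by linarith [hsp k hk j hj]) (mul_nonneg (hE j hj).le (hE k hk).le)).1
      (houter j hj) j hj
  have hEj := hE j hj
  have h2' : (2*(a0 - a j)^2) * (E j * E j) = 0 := by
    rw [← hinner]; ring
  rcases mul_eq_zero.1 h2' with h | h
  · have : (a0 - a j)^2 = 0 := by linarith [sq_nonneg (a0 - a j)]
    have := pow_eq_zero_iff (n := 2) (by norm_num) |>.1 this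
    linarith
  · exact absurd h (mul_pos hEj hEj).ne'

/-- A difference of positive first-order systems,
`g(t) = b₀ e^{−α₀ t} − Σ_{i≠0} bᵢ e^{−αᵢ t}`, satisfying the spread condition
`2(α₀ − αⱼ)² ≥ maxᵢ (αᵢ − αⱼ)²` for all `j ≠ 0`, is nonnegative on `[0,∞)` if
and only if it is log-concave on `[0,∞)`; in particular nonnegativity implies
`g'(t)² − g(t)·g''(t) ≥ 0` on `[0,∞)`. -/
theorem difference_positive_iff_log_concave {n : ℕ}
    (b a : Fin (n + 1) → ℝ) (hb : ∀ i, 0 < b i) (ha : ∀ i, 0 < a i)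
    (hspread : ∀ j : Fin (n + 1), j ≠ 0 →
      ∀ i : Fin (n + 1), (a i - a j) ^ 2 ≤ 2 * (a 0 - a j) ^ 2) :
    let g : ℝ → ℝ := fun t =>
      b 0 * Real.exp (-a 0 * t) -
        ∑ i ∈ Finset.univ.erase 0, b i * Real.exp (-a i * t)
    ((∀ t : ℝ, 0 ≤ t → 0 ≤ g t) ↔ LogConcaveOn (Set.Ici 0) g) ∧
      ((∀ t : ℝ, 0 ≤ t → 0 ≤ g t) →
        ∀ t : ℝ, 0 ≤ t → 0 ≤ deriv g t ^ 2 - g t * deriv (deriv g) t) := by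
  intro g
  classical
  have hE : ∀ (i : Fin (n+1)) (t : ℝ),
      HasDerivAt (fun u => b i * Real.exp (-a i * u)) (-a i * (b i * Real.exp (-a i * t))) t := by
    intro i t
    have h1 : HasDerivAt (fun u : ℝ => -a i * u) (-a i) t := by
      simpa using (hasDerivAt_id t).const_mul (-a i)
    have h2 := h1.exp.const_mul (b i)
    refine h2.congr_deriv ?_
    ring
  set G1 : ℝ → ℝ := fun t => -a 0 * (b 0 * Real.exp (-a 0 * t)) +
      ∑ i ∈ Finset.univ.erase 0, a i * (b i * Real.exp (-a i * t)) with hG1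
  set G2 : ℝ → ℝ := fun t => (a 0)^2 * (b 0 * Real.exp (-a 0 * t)) -
      ∑ i ∈ Finset.univ.erase 0, (a i)^2 * (b i * Real.exp (-a i * t)) with hG2
  have hDg : ∀ t, HasDerivAt g (G1 t) t := by
    intro t
    have h := (hE 0 t).sub (HasDerivAt.fun_sum fun (i : Fin (n+1)) (_ : i ∈ Finset.univ.erase 0) => hE i t)
    refine h.congr_deriv ?_
    simp only [hG1, neg_mul, Finset.sum_neg_distrib, sub_neg_eq_add]
  have hDg2 : ∀ t, HasDerivAt G1 (G2 t) t := by
    intro t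
    have h := ((hE 0 t).const_mul (-a 0)).add
      (HasDerivAt.fun_sum fun (i : Fin (n+1)) (_ : i ∈ Finset.univ.erase 0) => (hE i t).const_mul (a i))
    refine h.congr_deriv ?_
    have hsum2 : (∑ i ∈ Finset.univ.erase (0 : Fin (n+1)),
        a i * (-a i * (b i * Real.exp (-a i * t)))) =
        -∑ i ∈ Finset.univ.erase (0 : Fin (n+1)), (a i)^2 * (b i * Real.exp (-a i * t)) := by
      rw [← Finset.sum_neg_distrib]
      exact Finset.sum_congr rfl fun i _ => by ring
    simp only [hG2]
    rw [hsum2]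
    ring
  have hd1 : deriv g = G1 := funext fun t => (hDg t).deriv
  have hd2 : deriv (deriv g) = G2 := by
    rw [hd1]; exact funext fun t => (hDg2 t).deriv
  have hEpos : ∀ (i : Fin (n+1)) (t : ℝ), 0 < b i * Real.exp (-a i * t) :=
    fun i t => mul_pos (hb i) (Real.exp_pos _)
  have hkey : ∀ t : ℝ, 0 ≤ g t → 0 ≤ G1 t ^ 2 - g t * G2 t := by
    intro t hgt
    have hgt2 : (0:ℝ) ≤ b 0 * Real.exp (-a 0 * t) -
        ∑ i ∈ Finset.univ.erase 0, b i * Real.exp (-a i * t) := hgt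
    have := key_ineq' (Finset.univ.erase (0 : Fin (n+1))) (a 0) a
      (fun i => b i * Real.exp (-a i * t)) (fun i _ => hEpos i t)
      (fun j hj i _ => hspread j (Finset.ne_of_mem_erase hj) i)
      (b 0 * Real.exp (-a 0 * t)) (by linarith)
    exact this
  have hgc : Continuous g := by
    have h : Continuous (fun t : ℝ => b 0 * Real.exp (-a 0 * t) -
        ∑ i ∈ Finset.univ.erase (0 : Fin (n+1)), b i * Real.exp (-a i * t)) := by
      refine Continuous.sub ?_ (continuous_finset_sum _ fun i _ => ?_) <;>
        exact continuous_const.mul (Real.continuous_exp.comp (continuous_const.mul continuous_id))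
    exact h
  have hzero : (∀ t : ℝ, 0 ≤ t → 0 ≤ g t) → ∀ z : ℝ, 0 < z → g z = 0 → ∀ t, g t = 0 := by
    intro hnn z hz hgz
    have hmin : IsLocalMin g z := by
      filter_upwards [isOpen_Ioi.mem_nhds hz] with t ht
      rw [hgz]
      exact hnn t ht.le
    have hG1z : G1 z = 0 := by
      have h := hmin.deriv_eq_zero
      rwa [hd1] at h
    have h1 : b 0 * Real.exp (-a 0 * z) =
        ∑ i ∈ Finset.univ.erase (0 : Fin (n+1)), b i * Real.exp (-a i * z) := by
      have h : (0:ℝ) = b 0 * Real.exp (-a 0 * z) -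
          ∑ i ∈ Finset.univ.erase 0, b i * Real.exp (-a i * z) := hgz.symm
      linarith
    have h2 : (∑ i ∈ Finset.univ.erase (0 : Fin (n+1)), a i * (b i * Real.exp (-a i * z))) =
        a 0 * (b 0 * Real.exp (-a 0 * z)) := by
      have h : -a 0 * (b 0 * Real.exp (-a 0 * z)) +
          ∑ i ∈ Finset.univ.erase (0 : Fin (n+1)), a i * (b i * Real.exp (-a i * z)) = 0 := hG1z
      linarith
    have haj := key_eq' (Finset.univ.erase (0 : Fin (n+1))) (a 0) a
      (fun i => b i * Real.exp (-a i * z)) (fun i _ => hEpos i z)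
      (fun j hj i _ => hspread j (Finset.ne_of_mem_erase hj) i)
      (b 0 * Real.exp (-a 0 * z)) h1 h2
    have hgform : ∀ t : ℝ, g t =
        (b 0 - ∑ i ∈ Finset.univ.erase (0 : Fin (n+1)), b i) * Real.exp (-a 0 * t) := by
      intro t
      have hsum : (∑ i ∈ Finset.univ.erase (0 : Fin (n+1)), b i * Real.exp (-a i * t)) =
          (∑ i ∈ Finset.univ.erase (0 : Fin (n+1)), b i) * Real.exp (-a 0 * t) := by
        rw [Finset.sum_mul]
        exact Finset.sum_congr rfl fun i hi => by rw [haj i hi]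
      calc g t = b 0 * Real.exp (-a 0 * t) -
          ∑ i ∈ Finset.univ.erase (0 : Fin (n+1)), b i * Real.exp (-a i * t) := rfl
        _ = _ := by rw [hsum]; ring
    have hb0 : b 0 - ∑ i ∈ Finset.univ.erase (0 : Fin (n+1)), b i = 0 := by
      have hzz := hgz
      rw [hgform z] at hzz
      exact (mul_eq_zero.1 hzz).resolve_right (Real.exp_ne_zero _)
    intro t
    rw [hgform t, hb0, zero_mul]
  have hmain : ∀ (_ : ∀ t : ℝ, 0 ≤ t → 0 ≤ g t) (S : Set ℝ), Convex ℝ S →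
      interior S = Set.Ioi 0 → (∀ t ∈ S, 0 < g t) →
      ∀ x ∈ S, ∀ y ∈ S, ∀ l : ℝ, 0 ≤ l → l ≤ 1 →
      g x ^ l * g y ^ (1 - l) ≤ g (l * x + (1 - l) * y) := by
    intro hnn S hconv hint hSpos x hx y hy l hl0 hl1
    have hconc : ConcaveOn ℝ S (fun t => Real.log (g t)) := by
      refine concaveOn_of_hasDerivWithinAt2_nonpos (f' := fun t => G1 t / g t)
        (f'' := fun t => (G2 t * g t - G1 t * G1 t) / (g t)^2) hconv
        ?_ ?_ ?_ ?_
      · exact (hgc.continuousOn).log fun t ht => (hSpos t ht).ne'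
      · intro t ht
        have hgt : 0 < g t := hSpos t (interior_subset ht)
        exact ((hDg t).log hgt.ne').hasDerivWithinAt
      · intro t ht
        have hgt : 0 < g t := hSpos t (interior_subset ht)
        exact ((hDg2 t).div (hDg t) hgt.ne').hasDerivWithinAt
      · intro t ht
        have ht' : (0:ℝ) < t := by rw [hint] at ht; exact ht
        have hgt : 0 < g t := hSpos t (interior_subset ht)
        have hk := hkey t (hnn t ht'.le)
        apply div_nonpos_of_nonpos_of_nonneg _ (sq_nonneg _)
        nlinarith [hk]
    have hmem : l * x + (1 - l) * y ∈ S := by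
      have h := hconv hx hy hl0 (by linarith : (0:ℝ) ≤ 1 - l) (by ring)
      simpa using h
    have hle := hconc.2 hx hy hl0 (by linarith : (0:ℝ) ≤ 1 - l) (by ring)
    simp only [smul_eq_mul] at hle
    have hgx := hSpos x hx
    have hgy := hSpos y hy
    have hgm := hSpos _ hmem
    rw [Real.rpow_def_of_pos hgx, Real.rpow_def_of_pos hgy, ← Real.exp_add,
      ← Real.exp_log hgm]
    exact Real.exp_le_exp.2 (by linarith)
  refine ⟨⟨?_, ?_⟩, ?_⟩
  · intro hnn
    refine ⟨fun x hx => hnn x hx, ?_⟩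
    intro x hx y hy l hl0 hl1
    have hx' : (0:ℝ) ≤ x := hx
    have hy' : (0:ℝ) ≤ y := hy
    rcases eq_or_lt_of_le hl0 with h0 | h0
    · subst h0
      norm_num [Real.rpow_one]
    rcases eq_or_lt_of_le hl1 with h1 | h1
    · subst h1
      norm_num [Real.rpow_one]
    by_cases hall : ∀ t : ℝ, g t = 0
    · rw [hall x, hall y, hall (l * x + (1 - l) * y), Real.zero_rpow h0.ne', zero_mul]
    · have hpos : ∀ t : ℝ, 0 < t → 0 < g t := by
        intro t ht
        refine lt_of_le_of_ne (hnn t ht.le) fun h => hall (hzero hnn t ht h.symm)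
      have hmnn : (0:ℝ) ≤ l * x + (1 - l) * y :=
        add_nonneg (mul_nonneg h0.le hx') (mul_nonneg (by linarith) hy')
      by_cases hfx : g x = 0
      · rw [hfx, Real.zero_rpow h0.ne', zero_mul]
        exact hnn _ hmnn
      by_cases hfy : g y = 0
      · rw [hfy, Real.zero_rpow (by linarith : (1:ℝ) - l ≠ 0), mul_zero]
        exact hnn _ hmnn
      by_cases hg0 : g 0 = 0
      · have hx0 : x ∈ Set.Ioi (0:ℝ) := by
          rcases eq_or_lt_of_le hx' with h | h
          · exact absurd (h ▸ hg0) hfx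
          · exact h
        have hy0 : y ∈ Set.Ioi (0:ℝ) := by
          rcases eq_or_lt_of_le hy' with h | h
          · exact absurd (h ▸ hg0) hfy
          · exact h
        exact hmain hnn (Set.Ioi 0) (convex_Ioi 0) interior_Ioi
          (fun t ht => hpos t ht) x hx0 y hy0 l hl0 hl1
      · have hg0' : 0 < g 0 := (hnn 0 le_rfl).lt_of_ne (Ne.symm hg0)
        have hSpos : ∀ t ∈ Set.Ici (0:ℝ), 0 < g t := by
          intro t ht
          rcases eq_or_lt_of_le (Set.mem_Ici.1 ht) with h | h
          · exact h ▸ hg0'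
          · exact hpos t h
        exact hmain hnn (Set.Ici 0) (convex_Ici 0) interior_Ici hSpos x hx y hy l hl0 hl1
  · intro h t ht
    exact h.1 t ht
  · intro hnn t ht
    rw [hd2, hd1]
    exact hkey t (hnn t ht)
end

section
/- Let m, k, β > 0 with β² > 4k, set p = √(β² − 4k), and define the impulse response of the overdamped mass-spring-damper system by g(t) = (m/p)(e^{−(β−p)t/2} − e^{−(β+p)t/2}). Then g(t) ≥ 0 and g'(t)² − g(t)·g''(t) ≥ 0 for all t ≥ 0; hence g is log-concave on [0,∞) and the overdamped mass-spring-damper system is strongly unimodal. -/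
namespace MsdAux

variable (c a b : ℝ)

/-- The impulse response in normalized form. -/
noncomputable def G (t : ℝ) : ℝ := c * (Real.exp (-a * t) - Real.exp (-b * t))

lemma hasDerivAt_G (t : ℝ) :
    HasDerivAt (G c a b)
      (c * (-a * Real.exp (-a * t) - -b * Real.exp (-b * t))) t := by
  have h1 : HasDerivAt (fun t : ℝ => -a * t) (-a) t := by
    simpa using (hasDerivAt_id t).const_mul (-a)
  have h2 : HasDerivAt (fun t : ℝ => -b * t) (-b) t := by
    simpa using (hasDerivAt_id t).const_mul (-b)
  have := ((h1.exp).sub (h2.exp)).const_mul c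
  exact this.congr_deriv (by ring)

lemma deriv_G : deriv (G c a b) =
    fun t => c * (-a * Real.exp (-a * t) - -b * Real.exp (-b * t)) :=
  funext fun t => (hasDerivAt_G c a b t).deriv

lemma hasDerivAt_deriv_G (t : ℝ) :
    HasDerivAt (fun t => c * (-a * Real.exp (-a * t) - -b * Real.exp (-b * t)))
      (c * (a * a * Real.exp (-a * t) - b * b * Real.exp (-b * t))) t := by
  have h1 : HasDerivAt (fun t : ℝ => -a * t) (-a) t := by
    simpa using (hasDerivAt_id t).const_mul (-a)
  have h2 : HasDerivAt (fun t : ℝ => -b * t) (-b) t := by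
    simpa using (hasDerivAt_id t).const_mul (-b)
  have := (((h1.exp).const_mul (-a)).sub ((h2.exp).const_mul (-b))).const_mul c
  exact this.congr_deriv (by ring)

lemma G_rep (t : ℝ) :
    G c a b t = (c * Real.exp (-a * t)) * (1 - Real.exp (-(b - a) * t)) := by
  have h := Real.exp_add (-a * t) (-(b - a) * t)
  rw [show -a * t + -(b - a) * t = -b * t by ring] at h
  unfold G
  rw [h]
  ring

variable {c a b}

lemma G_nonneg (hc : 0 < c) (hab : a < b) {t : ℝ} (ht : 0 ≤ t) : 0 ≤ G c a b t := by
  have : Real.exp (-b * t) ≤ Real.exp (-a * t) := by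
    apply Real.exp_le_exp.mpr
    nlinarith
  unfold G
  nlinarith

lemma G_test (hc : 0 < c) (t : ℝ) :
    0 ≤ deriv (G c a b) t ^ 2 - G c a b t * deriv (deriv (G c a b)) t := by
  rw [deriv_G]
  rw [funext fun t => (hasDerivAt_deriv_G c a b t).deriv]
  unfold G
  have hE := Real.exp_pos (-a * t)
  have hF := Real.exp_pos (-b * t)
  have key : (c * (-a * Real.exp (-a * t) - -b * Real.exp (-b * t))) ^ 2 -
      c * (Real.exp (-a * t) - Real.exp (-b * t)) *
        (c * (a * a * Real.exp (-a * t) - b * b * Real.exp (-b * t))) =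
      c ^ 2 * (a - b) ^ 2 * (Real.exp (-a * t) * Real.exp (-b * t)) := by
    ring
  rw [key]
  positivity

lemma G_logconcave (hc : 0 < c) (ha : 0 < a) (hab : a < b) :
    LogConcaveOn (Set.Ici 0) (G c a b) := by
  constructor
  · intro x hx
    exact G_nonneg hc hab hx
  · intro x hx y hy l hl0 hl1
    have hx0 : (0:ℝ) ≤ x := hx
    have hy0 : (0:ℝ) ≤ y := hy
    have hl1' : 0 ≤ 1 - l := by linarith
    set z : ℝ := l * x + (1 - l) * y with hz
    have hC : ∀ t : ℝ, 0 < c * Real.exp (-a * t) := fun t => mul_pos hc (Real.exp_pos _)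
    have hu : ∀ t : ℝ, 0 ≤ t → 0 ≤ 1 - Real.exp (-(b - a) * t) := by
      intro t ht
      have : Real.exp (-(b - a) * t) ≤ Real.exp 0 := by
        apply Real.exp_le_exp.mpr
        nlinarith
      simp only [Real.exp_zero] at this
      linarith
    have hrpow : ∀ s w : ℝ, (c * Real.exp s) ^ w = c ^ w * Real.exp (s * w) := by
      intro s w
      rw [Real.mul_rpow hc.le (Real.exp_pos s).le, ← Real.exp_mul]
    calc G c a b x ^ l * G c a b y ^ (1 - l)
        = ((c * Real.exp (-a * x)) * (1 - Real.exp (-(b - a) * x))) ^ l *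
          ((c * Real.exp (-a * y)) * (1 - Real.exp (-(b - a) * y))) ^ (1 - l) := by
          rw [G_rep c a b x, G_rep c a b y]
      _ = ((c * Real.exp (-a * x)) ^ l * (c * Real.exp (-a * y)) ^ (1 - l)) *
          ((1 - Real.exp (-(b - a) * x)) ^ l * (1 - Real.exp (-(b - a) * y)) ^ (1 - l)) := by
          rw [Real.mul_rpow (hC x).le (hu x hx0), Real.mul_rpow (hC y).le (hu y hy0)]
          ring
      _ = (c * Real.exp (-a * z)) *
          ((1 - Real.exp (-(b - a) * x)) ^ l * (1 - Real.exp (-(b - a) * y)) ^ (1 - l)) := by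
          congr 1
          rw [hrpow, hrpow]
          calc c ^ l * Real.exp (-a * x * l) * (c ^ (1 - l) * Real.exp (-a * y * (1 - l)))
              = (c ^ l * c ^ (1 - l)) * (Real.exp (-a * x * l) * Real.exp (-a * y * (1 - l))) := by
                ring
            _ = c * Real.exp (-a * z) := by
                rw [← Real.rpow_add hc, ← Real.exp_add,
                  show l + (1 - l) = (1:ℝ) by ring, Real.rpow_one,
                  show -a * x * l + -a * y * (1 - l) = -a * z by rw [hz]; ring]
      _ ≤ (c * Real.exp (-a * z)) *
          (l * (1 - Real.exp (-(b - a) * x)) + (1 - l) * (1 - Real.exp (-(b - a) * y))) := by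
          apply mul_le_mul_of_nonneg_left _ (hC z).le
          exact Real.geom_mean_le_arith_mean2_weighted hl0 hl1' (hu x hx0) (hu y hy0)
            (by ring)
      _ ≤ (c * Real.exp (-a * z)) * (1 - Real.exp (-(b - a) * z)) := by
          apply mul_le_mul_of_nonneg_left _ (hC z).le
          have hconv := convexOn_exp.2 (Set.mem_univ (-(b - a) * x))
            (Set.mem_univ (-(b - a) * y)) hl0 hl1' (by ring)
          simp only [smul_eq_mul] at hconv
          rw [show l * (-(b - a) * x) + (1 - l) * (-(b - a) * y) = -(b - a) * z by
            rw [hz]; ring] at hconv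
          nlinarith
      _ = G c a b z := (G_rep c a b z).symm

end MsdAux

/-- The overdamped mass-spring-damper system (`β² > 4k`) has a nonnegative
impulse response `g(t) = (m/p)(e^{−(β−p)t/2} − e^{−(β+p)t/2})` with
`p = √(β² − 4k)`, satisfying the test `g'² − g·g'' ≥ 0` on `[0,∞)`; hence `g`
is log-concave on `[0,∞)` and the system is strongly unimodal. -/
theorem overdamped_msd_strongly_unimodal (m k β : ℝ)
    (hm : 0 < m) (hk : 0 < k) (hβ : 0 < β) (hover : β ^ 2 > 4 * k) :
    let p : ℝ := Real.sqrt (β ^ 2 - 4 * k)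
    let g : ℝ → ℝ := fun t =>
      m / p * (Real.exp (-(β - p) * t / 2) - Real.exp (-(β + p) * t / 2))
    (∀ t : ℝ, 0 ≤ t → 0 ≤ g t) ∧
      (∀ t : ℝ, 0 ≤ t → 0 ≤ deriv g t ^ 2 - g t * deriv (deriv g) t) ∧
      LogConcaveOn (Set.Ici 0) g := by
  intro p g
  have hp2 : 0 < β ^ 2 - 4 * k := by linarith
  have hp : 0 < p := Real.sqrt_pos.mpr hp2
  have hpβ : p < β := by
    have h1 : p < Real.sqrt (β ^ 2) := Real.sqrt_lt_sqrt (by linarith) (by nlinarith)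
    rwa [Real.sqrt_sq hβ.le] at h1
  have hc : 0 < m / p := div_pos hm hp
  have ha : 0 < (β - p) / 2 := by linarith
  have hab : (β - p) / 2 < (β + p) / 2 := by linarith
  have hg : g = MsdAux.G (m / p) ((β - p) / 2) ((β + p) / 2) := by
    funext t
    show m / p * (Real.exp (-(β - p) * t / 2) - Real.exp (-(β + p) * t / 2)) = _
    unfold MsdAux.G
    rw [show -(β - p) * t / 2 = -((β - p) / 2) * t by ring,
      show -(β + p) * t / 2 = -((β + p) / 2) * t by ring]
  rw [hg]
  exact ⟨fun t ht => MsdAux.G_nonneg hc hab ht,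
    fun t _ => MsdAux.G_test hc t,
    MsdAux.G_logconcave hc ha hab⟩
end
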